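/- arXiv:1406.6440 — 3 statements merged into one kernel-verified Lean document; each statement's English description precedes it below -/
import Mathlib

section
/- Let C = (C_1, ∅, ..., ∅, C_n) be a division of a totally ordered set S of size n with all middle sets empty. Then a permutation w of S is a C-permutation if and only if the elements of C_1 appear in w in ascending order and the elements of C_n appear in w in descending order. Consequently, the number of C-permutations is the binomial coefficient C(n, |C_1|). -/
open scoped Pointwise
open MeasureTheory Nat

namespace MixedEulerian

/-- A division of a finite set `S` into an ordered sequence of blocks,
with all elements of earlier blocks strictly smaller than those of later blocks. -/
def IsDivision (C : List (Finset ℕ)) (S : Finset ℕ) : Prop :=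
  (∀ s ∈ S, ∃ i, i < C.length ∧ s ∈ C.getD i ∅) ∧
  (∀ i, i < C.length → C.getD i ∅ ⊆ S) ∧
  (∀ i j, i < j → j < C.length →
    ∀ s ∈ C.getD i ∅, ∀ t ∈ C.getD j ∅, s < t)

/-- Type A admissibility: `s ∈ C_i` is admissible iff `s = min C₁`, `s = max C_n`,
or `i` is strictly between the first and the last index. (Indices are 0-based.) -/
def AdmissibleA (C : List (Finset ℕ)) (s : ℕ) : Prop :=
  ∃ i, i < C.length ∧ s ∈ C.getD i ∅ ∧
    ((i = 0 ∧ ∀ t ∈ C.getD 0 ∅, s ≤ t) ∨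
     (i = C.length - 1 ∧ ∀ t ∈ C.getD i ∅, t ≤ s) ∨
     (0 < i ∧ i + 1 < C.length))

/-- Type A deletion of `s` from the division `C`. -/
def deleteA (C : List (Finset ℕ)) (s : ℕ) : List (Finset ℕ) :=
  let i := C.findIdx (fun b => decide (s ∈ b))
  let B := C.getD i ∅
  let lo := B.filter (fun t => t < s)
  let hi := B.filter (fun t => s < t)
  if C.length ≤ 1 then []
  else if i = 0 then (hi ∪ C.getD 1 ∅) :: C.drop 2
  else if i = C.length - 1 then C.take (i - 1) ++ [C.getD (i - 1) ∅ ∪ lo]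
  else C.take (i - 1) ++ [C.getD (i - 1) ∅ ∪ lo, hi ∪ C.getD (i + 1) ∅] ++ C.drop (i + 2)

/-- `w` is a (type A) `C`-permutation: each entry is admissible in the division
obtained by deleting the previous entries, and all elements get deleted. -/
def IsCPermA : List (Finset ℕ) → List ℕ → Prop
  | C, [] => ∀ B ∈ C, B = ∅
  | C, s :: w => AdmissibleA C s ∧ IsCPermA (deleteA C s) w

/-- Type B admissibility: `s ∈ C_i` is admissible iff `s = min C₁` or `i ≠ 0`. -/
def AdmissibleB (C : List (Finset ℕ)) (s : ℕ) : Prop :=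
  ∃ i, i < C.length ∧ s ∈ C.getD i ∅ ∧
    ((i = 0 ∧ ∀ t ∈ C.getD 0 ∅, s ≤ t) ∨ i ≠ 0)

/-- Type B deletion of `s` from the division `C`. -/
def deleteB (C : List (Finset ℕ)) (s : ℕ) : List (Finset ℕ) :=
  let i := C.findIdx (fun b => decide (s ∈ b))
  if i = C.length - 1 ∧ 0 < i then
    C.take (i - 1) ++ [C.getD (i - 1) ∅ ∪ ((C.getD i ∅).erase s)]
  else deleteA C s

/-- `w` is a type B `C`-permutation. -/
def IsCPermB : List (Finset ℕ) → List ℕ → Prop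
  | C, [] => ∀ B ∈ C, B = ∅
  | C, s :: w => AdmissibleB C s ∧ IsCPermB (deleteB C s) w

/-- A sequence of elements that can be successively (type A) deleted from `C`. -/
def AdmissibleSeqA : List (Finset ℕ) → List ℕ → Prop
  | _, [] => True
  | C, s :: w => AdmissibleA C s ∧ AdmissibleSeqA (deleteA C s) w

/-- Number of descents of a list: the number of adjacent pairs that decrease. -/
def listDescents {α : Type*} [LinearOrder α] (l : List α) : ℕ :=
  (l.zip l.tail).countP (fun p => decide (p.2 < p.1))

/-- Eulerian number `A(n,k)`: permutations of `{1,…,n}` with exactly `k-1` descents. -/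
def eulerianA (n k : ℕ) : ℕ :=
  (List.range' 1 n).permutations.countP (fun l => decide (listDescents l = k - 1))

/-- `A(m,t;r)`: permutations of `{1,…,m+1}` with `t-1` descents and first entry `r+1`
(declared to be `0` when `t = 0`; it vanishes automatically when `t > m+1`). -/
def eulerianFirst (m t r : ℕ) : ℕ :=
  if t = 0 then 0 else
    (List.range' 1 (m + 1)).permutations.countP
      (fun l => decide (listDescents l = t - 1 ∧ l.headI = r + 1))

/-- The index of `t` in the `C`-permutation `w`: the (1-based) position of the block
containing `t` just before `t` is deleted. -/
def indexFn (C : List (Finset ℕ)) : List ℕ → ℕ → ℕ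
  | [], _ => 0
  | s :: w, t =>
      if t = s then C.findIdx (fun b => decide (t ∈ b)) + 1
      else indexFn (deleteA C s) w t

/-- An index function of `C`: any function sending each element of `C_i` into `{1,…,i}`
(1-based). -/
def IsIndexFn (C : List (Finset ℕ)) (I : ℕ → ℕ) : Prop :=
  ∀ i, i < C.length → ∀ s ∈ C.getD i ∅, 1 ≤ I s ∧ I s ≤ i + 1

/-- `C` is superdiagonal: `|C₁| + ⋯ + |C_i| ≥ i` for all `i`. -/
def Superdiagonal (C : List (Finset ℕ)) : Prop :=
  ∀ i, i ≤ C.length → i ≤ ∑ j ∈ Finset.range i, (C.getD j ∅).card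

/-- `C` is subdiagonal: `|C_n| + ⋯ + |C_{n-i+1}| ≥ i` for all `i`. -/
def Subdiagonal (C : List (Finset ℕ)) : Prop :=
  ∀ i, i ≤ C.length → i ≤ ∑ j ∈ Finset.range i, (C.getD (C.length - 1 - j) ∅).card

/-- The canonical division of `{1,…,c.sum}` with block sizes given by `c`. -/
def divisionOf (c : List ℕ) : List (Finset ℕ) :=
  (List.range c.length).map (fun i => Finset.Ioc ((c.take i).sum) ((c.take (i + 1)).sum))

/-- The number of `C`-permutations for a division with block sizes `c`. -/
noncomputable def NPerm (c : List ℕ) : ℕ :=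
  Nat.card {w : List ℕ // IsCPermA (divisionOf c) w}

/-- The division of `{1,…,n}` with all elements in (1-based) position `k`. -/
def midDivision (n k : ℕ) : List (Finset ℕ) :=
  List.replicate (k - 1) ∅ ++ [Finset.Icc 1 n] ++ List.replicate (n - k) ∅

/-- The hypersimplex `Δ_{k,n} ⊆ ℝ^{n+1}`. -/
def hypersimplex (n k : ℕ) : Set (Fin (n + 1) → ℝ) :=
  convexHull ℝ {x | ∃ T : Finset (Fin (n + 1)), T.card = k ∧
    x = fun i => if i ∈ T then (1 : ℝ) else 0}

/-- The permutohedron `P(y₁,…,y_m) ⊆ ℝ^m`. -/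
def permutohedron {m : ℕ} (y : Fin m → ℝ) : Set (Fin m → ℝ) :=
  convexHull ℝ {x | ∃ w : Equiv.Perm (Fin m), x = y ∘ w}

/-- The polytope `Γ_{k,n} ⊆ ℝ^n`, the convex hull of all `±e_{i₁} ± ⋯ ± e_{i_k}`. -/
def gammaPolytope (n k : ℕ) : Set (Fin n → ℝ) :=
  convexHull ℝ {x | ∃ T : Finset (Fin n), T.card = k ∧ ∃ ε : Fin n → ℝ,
    (∀ i, ε i = 1 ∨ ε i = -1) ∧ x = fun i => if i ∈ T then ε i else 0}

/-- The signed permutohedron `SP(y₁,…,y_n) ⊆ ℝ^n`. -/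
def signedPermutohedron {m : ℕ} (y : Fin m → ℝ) : Set (Fin m → ℝ) :=
  convexHull ℝ {x | ∃ w : Equiv.Perm (Fin m), ∃ ε : Fin m → ℝ,
    (∀ i, ε i = 1 ∨ ε i = -1) ∧ x = fun i => ε i * y (w i)}


/-! ### Auxiliary development -/

/-- Interleaving predicate. -/
def InterP : Finset ℕ → Finset ℕ → List ℕ → Prop
  | A, B, [] => A = ∅ ∧ B = ∅
  | A, B, s :: w => (s ∈ A ∧ (∀ t ∈ A, s ≤ t) ∧ InterP (A.erase s) B w) ∨
                    (s ∈ B ∧ (∀ t ∈ B, t ≤ s) ∧ InterP A (B.erase s) w)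

def LDiv (m : ℕ) (A B : Finset ℕ) : List (Finset ℕ) := A :: (List.replicate m ∅ ++ [B])

lemma LDiv_length (m : ℕ) (A B : Finset ℕ) : (LDiv m A B).length = m + 2 := by
  simp [LDiv]

lemma LDiv_succ (m : ℕ) (A B : Finset ℕ) : LDiv (m+1) A B = A :: LDiv m ∅ B := by
  simp [LDiv, List.replicate_succ]

lemma getD_LDiv (m : ℕ) (A B : Finset ℕ) : ∀ i,
    (LDiv m A B).getD i ∅ = if i = 0 then A else if i = m + 1 then B else ∅ := by
  induction m generalizing A with
  | zero =>
    rintro (_ | _ | i) <;> simp [LDiv]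
  | succ k ih =>
    rintro (_ | i)
    · simp [LDiv]
    · rw [LDiv_succ, List.getD_cons_succ, ih]
      rcases eq_or_ne i 0 with rfl | h0
      · simp
      · rcases eq_or_ne i (k+1) with rfl | h1
        · simp
        · simp only [if_neg h0, if_neg h1]
          have h2 : i + 1 ≠ 0 := by omega
          have h3 : i + 1 ≠ k + 1 + 1 := by omega
          simp [if_neg h2, if_neg h3, if_neg h1]

lemma findIdx_LDiv_left {m : ℕ} {A B : Finset ℕ} {s : ℕ} (hs : s ∈ A) :
    (LDiv m A B).findIdx (fun b => decide (s ∈ b)) = 0 := by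
  simp [LDiv, List.findIdx_cons, hs]

lemma findIdx_LDiv_right {m : ℕ} {A B : Finset ℕ} {s : ℕ} (hsA : s ∉ A) (hsB : s ∈ B) :
    (LDiv m A B).findIdx (fun b => decide (s ∈ b)) = m + 1 := by
  induction m generalizing A with
  | zero => simp [LDiv, List.findIdx_cons, hsA, hsB]
  | succ k ih =>
    rw [LDiv_succ, List.findIdx_cons]
    simp [hsA, ih (Finset.notMem_empty s)]

lemma filter_gt_of_min {A : Finset ℕ} {s : ℕ} (hs : s ∈ A) (hmin : ∀ t ∈ A, s ≤ t) :
    A.filter (fun t => s < t) = A.erase s := by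
  ext t
  simp only [Finset.mem_filter, Finset.mem_erase]
  constructor
  · rintro ⟨ht, hlt⟩; exact ⟨(_root_.ne_of_lt hlt).symm, ht⟩
  · rintro ⟨hne, ht⟩; exact ⟨ht, lt_of_le_of_ne (hmin t ht) (Ne.symm hne)⟩

lemma filter_lt_of_max {B : Finset ℕ} {s : ℕ} (hs : s ∈ B) (hmax : ∀ t ∈ B, t ≤ s) :
    B.filter (fun t => t < s) = B.erase s := by
  ext t
  simp only [Finset.mem_filter, Finset.mem_erase]
  constructor
  · rintro ⟨ht, hlt⟩; exact ⟨_root_.ne_of_lt hlt, ht⟩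
  · rintro ⟨hne, ht⟩; exact ⟨ht, lt_of_le_of_ne (hmax t ht) hne⟩

lemma adm_LDiv_iff {m : ℕ} {A B : Finset ℕ} {s : ℕ} :
    AdmissibleA (LDiv m A B) s ↔ (s ∈ A ∧ ∀ t ∈ A, s ≤ t) ∨ (s ∈ B ∧ ∀ t ∈ B, t ≤ s) := by
  unfold AdmissibleA
  rw [LDiv_length]
  constructor
  · rintro ⟨i, hi, hmem, hcase⟩
    rw [getD_LDiv] at hmem
    split_ifs at hmem with h0 h1
    · subst h0
      left
      refine ⟨hmem, ?_⟩
      rcases hcase with ⟨_, hmin⟩ | ⟨hlen, _⟩ | ⟨hpos, _⟩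
      · rw [getD_LDiv] at hmin; simpa using hmin
      · omega
      · omega
    · subst h1
      right
      refine ⟨hmem, ?_⟩
      rcases hcase with ⟨h0', _⟩ | ⟨_, hmax⟩ | ⟨_, hlt⟩
      · omega
      · rw [getD_LDiv] at hmax; simpa using hmax
      · omega
    · exact absurd hmem (Finset.notMem_empty s)
  · rintro (⟨hsA, hmin⟩ | ⟨hsB, hmax⟩)
    · refine ⟨0, by omega, ?_, Or.inl ⟨rfl, ?_⟩⟩
      · rw [getD_LDiv]; simpa using hsA
      · rw [getD_LDiv]; simpa using hmin
    · refine ⟨m + 1, by omega, ?_, Or.inr (Or.inl ⟨by omega, ?_⟩)⟩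
      · rw [getD_LDiv]; simpa using hsB
      · rw [getD_LDiv]; simpa using hmax

lemma deleteA_min_zero {A B : Finset ℕ} {s : ℕ} (hs : s ∈ A) (hmin : ∀ t ∈ A, s ≤ t) :
    deleteA (LDiv 0 A B) s = [(A.erase s) ∪ B] := by
  unfold deleteA
  rw [findIdx_LDiv_left hs]
  rw [if_neg (show ¬((LDiv 0 A B).length ≤ 1) by rw [LDiv_length]; omega)]
  rw [if_pos rfl]
  simp [LDiv, filter_gt_of_min hs hmin]

lemma deleteA_min_succ {k : ℕ} {A B : Finset ℕ} {s : ℕ} (hs : s ∈ A) (hmin : ∀ t ∈ A, s ≤ t) :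
    deleteA (LDiv (k+1) A B) s = LDiv k (A.erase s) B := by
  unfold deleteA
  rw [findIdx_LDiv_left hs]
  rw [if_neg (show ¬((LDiv (k+1) A B).length ≤ 1) by rw [LDiv_length]; omega)]
  rw [if_pos rfl]
  rw [LDiv_succ]
  simp [LDiv, filter_gt_of_min hs hmin]

lemma deleteA_max_zero {A B : Finset ℕ} {s : ℕ} (hsA : s ∉ A) (hs : s ∈ B)
    (hmax : ∀ t ∈ B, t ≤ s) :
    deleteA (LDiv 0 A B) s = [A ∪ B.erase s] := by
  unfold deleteA
  rw [findIdx_LDiv_right hsA hs]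
  rw [if_neg (show ¬((LDiv 0 A B).length ≤ 1) by rw [LDiv_length]; omega)]
  rw [if_neg (show (0:ℕ)+1 ≠ 0 by omega)]
  rw [if_pos (show (0:ℕ)+1 = (LDiv 0 A B).length - 1 by rw [LDiv_length])]
  simp [LDiv, filter_lt_of_max hs hmax]

lemma deleteA_max_succ {k : ℕ} {A B : Finset ℕ} {s : ℕ} (hsA : s ∉ A) (hs : s ∈ B)
    (hmax : ∀ t ∈ B, t ≤ s) :
    deleteA (LDiv (k+1) A B) s = LDiv k A (B.erase s) := by
  unfold deleteA
  rw [findIdx_LDiv_right hsA hs]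
  rw [if_neg (show ¬((LDiv (k+1) A B).length ≤ 1) by rw [LDiv_length]; omega)]
  rw [if_neg (show (k:ℕ)+1+1 ≠ 0 by omega)]
  rw [if_pos (show (k:ℕ)+1+1 = (LDiv (k+1) A B).length - 1 by rw [LDiv_length]; omega)]
  rw [getD_LDiv, getD_LDiv]
  rw [if_neg (show (k:ℕ)+1+1 ≠ 0 by omega), if_pos rfl]
  rw [if_neg (show (k:ℕ)+1+1-1 ≠ 0 by omega), if_neg (show (k:ℕ)+1+1-1 ≠ (k+1)+1 by omega)]
  rw [filter_lt_of_max hs hmax]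
  have htake : List.take (k+1+1-1) (LDiv (k+1) A B) = A :: List.replicate k ∅ := by
    show List.take (k+1) (A :: (List.replicate (k+1) ∅ ++ [B])) = _
    rw [List.take_succ_cons]
    congr 1
    rw [List.take_append_of_le_length (by simp <;> omega)]
    simp [List.take_replicate]
  rw [htake]
  simp [LDiv]


lemma isCPermA_nil_list (w : List ℕ) : IsCPermA [] w ↔ w = [] := by
  cases w with
  | nil => simp [IsCPermA]
  | cons s w => simp [IsCPermA, AdmissibleA]

lemma isCPermA_singleton (t : ℕ) (w : List ℕ) :
    IsCPermA [({t} : Finset ℕ)] w ↔ w = [t] := by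
  cases w with
  | nil => simp [IsCPermA]
  | cons s w =>
    simp only [IsCPermA]
    constructor
    · rintro ⟨⟨i, hi, hmem, -⟩, hrest⟩
      simp only [List.length_singleton] at hi
      interval_cases i
      simp only [List.getD_cons_zero, Finset.mem_singleton] at hmem
      subst hmem
      have hdel : deleteA [({s} : Finset ℕ)] s = [] := by
        unfold deleteA; simp
      rw [hdel, isCPermA_nil_list] at hrest
      rw [hrest]
    · intro h
      rw [List.cons.injEq] at h
      obtain ⟨rfl, rfl⟩ := h
      refine ⟨⟨0, by simp, by simp, Or.inl ⟨rfl, by simp⟩⟩, ?_⟩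
      have hdel : deleteA [({s} : Finset ℕ)] s = [] := by
        unfold deleteA; simp
      rw [hdel, isCPermA_nil_list]

lemma interP_nil_nil (w : List ℕ) : InterP ∅ ∅ w ↔ w = [] := by
  cases w <;> simp [InterP]

lemma interP_single {A B : Finset ℕ} {t : ℕ} (hd : Disjoint A B) (hu : A ∪ B = {t})
    (w : List ℕ) : InterP A B w ↔ w = [t] := by
  have hA : A = ∅ ∨ A = {t} := by
    have : A ⊆ {t} := hu ▸ Finset.subset_union_left
    exact Finset.subset_singleton_iff.1 this
  have hB : B = ∅ ∨ B = {t} := by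
    have : B ⊆ {t} := hu ▸ Finset.subset_union_right
    exact Finset.subset_singleton_iff.1 this
  rcases hA with rfl | rfl <;> rcases hB with rfl | rfl
  · rw [Finset.union_empty] at hu
    exact absurd hu.symm (Finset.singleton_ne_empty t)
  · cases w with
    | nil => simp [InterP]
    | cons s w =>
      simp only [InterP]
      constructor
      · rintro (⟨h, -⟩ | ⟨hs, -, hrec⟩)
        · exact absurd h (Finset.notMem_empty s)
        · rw [Finset.mem_singleton] at hs
          subst hs
          rw [Finset.erase_singleton, interP_nil_nil] at hrec
          rw [hrec]
      · intro h
        rw [List.cons.injEq] at h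
        obtain ⟨rfl, rfl⟩ := h
        refine Or.inr ⟨Finset.mem_singleton_self s, by simp, ?_⟩
        rw [Finset.erase_singleton, interP_nil_nil]
  · cases w with
    | nil => simp [InterP]
    | cons s w =>
      simp only [InterP]
      constructor
      · rintro (⟨hs, -, hrec⟩ | ⟨h, -⟩)
        · rw [Finset.mem_singleton] at hs
          subst hs
          rw [Finset.erase_singleton, interP_nil_nil] at hrec
          rw [hrec]
        · exact absurd h (Finset.notMem_empty s)
      · intro h
        rw [List.cons.injEq] at h
        obtain ⟨rfl, rfl⟩ := h
        refine Or.inl ⟨Finset.mem_singleton_self s, by simp, ?_⟩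
        rw [Finset.erase_singleton, interP_nil_nil]
  · exfalso
    have := Finset.disjoint_left.1 hd (Finset.mem_singleton_self t) (Finset.mem_singleton_self t)
    exact this

lemma interP_mem : ∀ {w : List ℕ} {A B : Finset ℕ} {x : ℕ},
    InterP A B w → x ∈ w → x ∈ A ∪ B := by
  intro w
  induction w with
  | nil => intro A B x h hx; simp at hx
  | cons s w ih =>
    intro A B x h hx
    rcases List.mem_cons.1 hx with rfl | hx'
    · rcases h with ⟨hs, -, -⟩ | ⟨hs, -, -⟩
      · exact Finset.mem_union_left _ hs
      · exact Finset.mem_union_right _ hs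
    · rcases h with ⟨-, -, hrec⟩ | ⟨-, -, hrec⟩
      · have := ih hrec hx'
        rcases Finset.mem_union.1 this with h' | h'
        · exact Finset.mem_union_left _ (Finset.mem_of_mem_erase h')
        · exact Finset.mem_union_right _ h'
      · have := ih hrec hx'
        rcases Finset.mem_union.1 this with h' | h'
        · exact Finset.mem_union_left _ h'
        · exact Finset.mem_union_right _ (Finset.mem_of_mem_erase h')

lemma interP_perm : ∀ {w : List ℕ} {A B : Finset ℕ},
    Disjoint A B → InterP A B w → w.Perm (A ∪ B).toList := by
  intro w
  induction w with
  | nil =>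
    intro A B _ h
    obtain ⟨rfl, rfl⟩ := h
    simp
  | cons s w ih =>
    intro A B hd h
    rcases h with ⟨hs, -, hrec⟩ | ⟨hs, -, hrec⟩
    · have hd' : Disjoint (A.erase s) B := hd.mono_left (Finset.erase_subset s A)
      have hw := ih hd' hrec
      have hnot : s ∉ A.erase s ∪ B := by
        simp [Finset.disjoint_left.1 hd hs]
      have hins : A ∪ B = insert s (A.erase s ∪ B) := by
        rw [← Finset.insert_union, Finset.insert_erase hs]
      rw [hins]
      exact (hw.cons s).trans (Finset.toList_insert hnot).symm
    · have hd' : Disjoint A (B.erase s) := hd.mono_right (Finset.erase_subset s B)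
      have hw := ih hd' hrec
      have hnot : s ∉ A ∪ B.erase s := by
        simp [Finset.disjoint_right.1 hd hs]
      have hins : A ∪ B = insert s (A ∪ B.erase s) := by
        rw [← Finset.union_insert, Finset.insert_erase hs]
      rw [hins]
      exact (hw.cons s).trans (Finset.toList_insert hnot).symm

lemma sort_erase_min {A : Finset ℕ} {s : ℕ} (hs : s ∈ A) (hmin : ∀ t ∈ A, s ≤ t) :
    A.sort (· ≤ ·) = s :: (A.erase s).sort (· ≤ ·) := by
  have h1 : (A.sort (· ≤ ·)).Perm A.toList := Finset.sort_perm_toList _ _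
  have h2 : A.toList = (insert s (A.erase s)).toList := by rw [Finset.insert_erase hs]
  have h3 : ((insert s (A.erase s)).toList).Perm (s :: (A.erase s).toList) :=
    Finset.toList_insert (Finset.notMem_erase s A)
  have h4 : ((A.erase s).toList).Perm ((A.erase s).sort (· ≤ ·)) :=
    (Finset.sort_perm_toList _ _).symm
  have hperm := (h1.trans (h2 ▸ h3)).trans (h4.cons s)
  have hs2 : (s :: (A.erase s).sort (· ≤ ·)).Pairwise (· ≤ ·) := by
    rw [List.pairwise_cons]
    exact ⟨fun b hb => hmin b (Finset.mem_of_mem_erase ((Finset.mem_sort _).1 hb)),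
      Finset.pairwise_sort _ _⟩
  exact List.Perm.eq_of_pairwise' (Finset.pairwise_sort _ _) hs2 hperm

lemma sort_erase_max {B : Finset ℕ} {s : ℕ} (hs : s ∈ B) (hmax : ∀ t ∈ B, t ≤ s) :
    B.sort (· ≤ ·) = (B.erase s).sort (· ≤ ·) ++ [s] := by
  have h1 : (B.sort (· ≤ ·)).Perm B.toList := Finset.sort_perm_toList _ _
  have h2 : B.toList = (insert s (B.erase s)).toList := by rw [Finset.insert_erase hs]
  have h3 : ((insert s (B.erase s)).toList).Perm (s :: (B.erase s).toList) :=
    Finset.toList_insert (Finset.notMem_erase s B)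
  have h4 : ((B.erase s).toList).Perm ((B.erase s).sort (· ≤ ·)) :=
    (Finset.sort_perm_toList _ _).symm
  have hperm := ((h1.trans (h2 ▸ h3)).trans (h4.cons s)).trans
    (List.perm_append_singleton s _).symm
  have hs2 : ((B.erase s).sort (· ≤ ·) ++ [s]).Pairwise (· ≤ ·) := by
    rw [List.pairwise_append]
    refine ⟨Finset.pairwise_sort _ _, by simp, ?_⟩
    intro a ha b hb
    rw [List.mem_singleton] at hb
    subst hb
    exact hmax a (Finset.mem_of_mem_erase ((Finset.mem_sort _).1 ha))
  exact List.Perm.eq_of_pairwise' (Finset.pairwise_sort _ _) hs2 hperm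

lemma interP_filter : ∀ {w : List ℕ} {A B : Finset ℕ}, Disjoint A B → InterP A B w →
    w.filter (fun x => decide (x ∈ A)) = A.sort (· ≤ ·) ∧
    (w.filter (fun x => decide (x ∈ B))).reverse = B.sort (· ≤ ·) := by
  intro w
  induction w with
  | nil =>
    intro A B _ h
    obtain ⟨rfl, rfl⟩ := h
    simp
  | cons s w ih =>
    intro A B hd h
    rcases h with ⟨hs, hmin, hrec⟩ | ⟨hs, hmax, hrec⟩
    · have hd' : Disjoint (A.erase s) B := hd.mono_left (Finset.erase_subset s A)
      obtain ⟨h1, h2⟩ := ih hd' hrec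
      have hsB : s ∉ B := Finset.disjoint_left.1 hd hs
      have hcongrA : w.filter (fun x => decide (x ∈ A)) =
          w.filter (fun x => decide (x ∈ A.erase s)) := by
        apply List.filter_congr
        intro x hx
        have hxm := interP_mem hrec hx
        rcases Finset.mem_union.1 hxm with h' | h'
        · simp [Finset.mem_of_mem_erase h', h']
        · have : x ∉ A := Finset.disjoint_right.1 hd h'
          simp [this, fun hh : x ∈ A.erase s => this (Finset.mem_of_mem_erase hh)]
      constructor
      · rw [List.filter_cons_of_pos (by simpa using hs), hcongrA, h1,
          sort_erase_min hs hmin]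
      · rw [List.filter_cons_of_neg (by simpa using hsB)]
        exact h2
    · have hd' : Disjoint A (B.erase s) := hd.mono_right (Finset.erase_subset s B)
      obtain ⟨h1, h2⟩ := ih hd' hrec
      have hsA : s ∉ A := Finset.disjoint_right.1 hd hs
      have hcongrB : w.filter (fun x => decide (x ∈ B)) =
          w.filter (fun x => decide (x ∈ B.erase s)) := by
        apply List.filter_congr
        intro x hx
        have hxm := interP_mem hrec hx
        rcases Finset.mem_union.1 hxm with h' | h'
        · have : x ∉ B := Finset.disjoint_left.1 hd h'
          simp [this, fun hh : x ∈ B.erase s => this (Finset.mem_of_mem_erase hh)]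
        · simp [Finset.mem_of_mem_erase h', h']
      constructor
      · rw [List.filter_cons_of_neg (by simpa using hsA)]
        exact h1
      · rw [List.filter_cons_of_pos (by simpa using hs), List.reverse_cons, hcongrB, h2,
          sort_erase_max hs hmax]

lemma interP_of_filters : ∀ {w : List ℕ} {A B : Finset ℕ}, Disjoint A B →
    w.Perm (A ∪ B).toList →
    w.filter (fun x => decide (x ∈ A)) = A.sort (· ≤ ·) →
    (w.filter (fun x => decide (x ∈ B))).reverse = B.sort (· ≤ ·) →
    InterP A B w := by
  intro w
  induction w with
  | nil =>
    intro A B _ hp _ _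
    have : (A ∪ B).toList = [] := hp.symm.eq_nil
    rw [Finset.toList_eq_nil] at this
    obtain ⟨h1, h2⟩ := Finset.union_eq_empty.1 this
    exact ⟨h1, h2⟩
  | cons s w ih =>
    intro A B hd hp h1 h2
    have hs : s ∈ A ∪ B := Finset.mem_toList.1 (hp.subset List.mem_cons_self)
    rcases Finset.mem_union.1 hs with hsA | hsB
    · have hsB : s ∉ B := Finset.disjoint_left.1 hd hsA
      rw [List.filter_cons_of_pos (by simpa using hsA)] at h1
      have hmin : ∀ t ∈ A, s ≤ t := by
        intro t ht
        have hsorted := Finset.pairwise_sort A (· ≤ ·)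
        rw [← h1, List.pairwise_cons] at hsorted
        have htmem : t ∈ A.sort (· ≤ ·) := (Finset.mem_sort _).2 ht
        rw [← h1] at htmem
        rcases List.mem_cons.1 htmem with rfl | ht'
        · exact le_refl t
        · exact hsorted.1 t ht'
      have hnot : s ∉ A.erase s ∪ B := by
        simp [hsB]
      have hins : A ∪ B = insert s (A.erase s ∪ B) := by
        rw [← Finset.insert_union, Finset.insert_erase hsA]
      have hp' : w.Perm (A.erase s ∪ B).toList := by
        have := hp.trans (hins ▸ (Finset.toList_insert hnot))
        exact this.cons_inv
      have hd' : Disjoint (A.erase s) B := hd.mono_left (Finset.erase_subset s A)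
      have hwmem : ∀ x ∈ w, x ∈ A.erase s ∪ B := fun x hx =>
        Finset.mem_toList.1 (hp'.subset hx)
      have hcongrA : w.filter (fun x => decide (x ∈ A)) =
          w.filter (fun x => decide (x ∈ A.erase s)) := by
        apply List.filter_congr
        intro x hx
        rcases Finset.mem_union.1 (hwmem x hx) with h' | h'
        · simp [Finset.mem_of_mem_erase h', h']
        · have : x ∉ A := Finset.disjoint_right.1 hd h'
          simp [this, fun hh : x ∈ A.erase s => this (Finset.mem_of_mem_erase hh)]
      refine Or.inl ⟨hsA, hmin, ih hd' hp' ?_ ?_⟩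
      · rw [← hcongrA]
        have := h1.trans (sort_erase_min hsA hmin)
        rw [List.cons.injEq] at this
        exact this.2
      · rw [List.filter_cons_of_neg (by simpa using hsB)] at h2
        exact h2
    · have hsA : s ∉ A := Finset.disjoint_right.1 hd hsB
      rw [List.filter_cons_of_pos (by simpa using hsB), List.reverse_cons] at h2
      have hmax : ∀ t ∈ B, t ≤ s := by
        intro t ht
        have hsorted := Finset.pairwise_sort B (· ≤ ·)
        rw [← h2, List.pairwise_append] at hsorted
        have htmem : t ∈ B.sort (· ≤ ·) := (Finset.mem_sort _).2 ht
        rw [← h2, List.mem_append] at htmem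
        rcases htmem with ht' | ht'
        · exact hsorted.2.2 t ht' s (List.mem_singleton_self s)
        · rw [List.mem_singleton] at ht'
          exact le_of_eq ht'
      have hnot : s ∉ A ∪ B.erase s := by
        simp [hsA]
      have hins : A ∪ B = insert s (A ∪ B.erase s) := by
        rw [← Finset.union_insert, Finset.insert_erase hsB]
      have hp' : w.Perm (A ∪ B.erase s).toList := by
        have := hp.trans (hins ▸ (Finset.toList_insert hnot))
        exact this.cons_inv
      have hd' : Disjoint A (B.erase s) := hd.mono_right (Finset.erase_subset s B)
      have hwmem : ∀ x ∈ w, x ∈ A ∪ B.erase s := fun x hx =>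
        Finset.mem_toList.1 (hp'.subset hx)
      have hcongrB : w.filter (fun x => decide (x ∈ B)) =
          w.filter (fun x => decide (x ∈ B.erase s)) := by
        apply List.filter_congr
        intro x hx
        rcases Finset.mem_union.1 (hwmem x hx) with h' | h'
        · have : x ∉ B := Finset.disjoint_left.1 hd h'
          simp [this, fun hh : x ∈ B.erase s => this (Finset.mem_of_mem_erase hh)]
        · simp [Finset.mem_of_mem_erase h', h']
      refine Or.inr ⟨hsB, hmax, ih hd' hp' ?_ ?_⟩
      · rw [List.filter_cons_of_neg (by simpa using hsA)] at h1
        exact h1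
      · rw [← hcongrB]
        have := h2.trans (sort_erase_max hsB hmax)
        exact List.append_cancel_right this

lemma interP_finite (A B : Finset ℕ) (hd : Disjoint A B) : {w : List ℕ | InterP A B w}.Finite := by
  apply Set.Finite.subset ((A ∪ B).toList.permutations.toFinset.finite_toSet)
  intro w hw
  simp only [List.coe_toFinset, Set.mem_setOf_eq, List.mem_permutations]
  exact interP_perm hd hw

lemma interP_ncard : ∀ (N : ℕ) (A B : Finset ℕ), Disjoint A B → A.card + B.card = N →
    {w : List ℕ | InterP A B w}.ncard = N.choose A.card := by
  intro N
  induction N with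
  | zero =>
    intro A B hd hc
    have hA : A = ∅ := Finset.card_eq_zero.1 (by omega)
    have hB : B = ∅ := Finset.card_eq_zero.1 (by omega)
    subst hA; subst hB
    have : {w : List ℕ | InterP ∅ ∅ w} = {[]} := by
      ext w; simp [interP_nil_nil w]
    rw [this]
    simp
  | succ N ih =>
    intro A B hd hc
    rcases eq_or_ne A ∅ with rfl | hA
    · have hBne : B.Nonempty := Finset.card_pos.1 (by simp at hc; omega)
      set b := B.max' hBne with hb
      have hset : {w : List ℕ | InterP ∅ B w} =
          (fun w => b :: w) '' {w : List ℕ | InterP ∅ (B.erase b) w} := by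
        ext w
        simp only [Set.mem_setOf_eq, Set.mem_image]
        constructor
        · intro hw
          cases w with
          | nil => exact absurd hw.2 (Finset.nonempty_iff_ne_empty.1 hBne)
          | cons s w' =>
            rcases hw with ⟨h', -⟩ | ⟨hs, hmax, hrec⟩
            · exact absurd h' (Finset.notMem_empty s)
            · have hsb : s = b := le_antisymm (B.le_max' s hs) (hmax b (B.max'_mem hBne))
              subst hsb
              exact ⟨w', hrec, rfl⟩
        · rintro ⟨w', hw', rfl⟩
          exact Or.inr ⟨B.max'_mem hBne, fun t ht => B.le_max' t ht, hw'⟩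
      rw [hset, Set.ncard_image_of_injective _ (fun x y h => by simpa using h)]
      rw [ih ∅ (B.erase b) (Finset.disjoint_left.2 (by simp))
        (by rw [Finset.card_erase_of_mem (B.max'_mem hBne)]; simp only [Finset.card_empty] at hc ⊢; omega)]
      simp
    · rcases eq_or_ne B ∅ with rfl | hB
      · have hAne : A.Nonempty := Finset.nonempty_iff_ne_empty.2 hA
        set a := A.min' hAne with ha
        have hset : {w : List ℕ | InterP A ∅ w} =
            (fun w => a :: w) '' {w : List ℕ | InterP (A.erase a) ∅ w} := by
          ext w
          simp only [Set.mem_setOf_eq, Set.mem_image]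
          constructor
          · intro hw
            cases w with
            | nil => exact absurd hw.1 hA
            | cons s w' =>
              rcases hw with ⟨hs, hmin, hrec⟩ | ⟨h', -⟩
              · have hsa : s = a := le_antisymm (hmin a (A.min'_mem hAne)) (A.min'_le s hs)
                subst hsa
                exact ⟨w', hrec, rfl⟩
              · exact absurd h' (Finset.notMem_empty s)
          · rintro ⟨w', hw', rfl⟩
            exact Or.inl ⟨A.min'_mem hAne, fun t ht => A.min'_le t ht, hw'⟩
        rw [hset, Set.ncard_image_of_injective _ (fun x y h => by simpa using h)]
        rw [ih (A.erase a) ∅ (Finset.disjoint_right.2 (by simp))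
          (by rw [Finset.card_erase_of_mem (A.min'_mem hAne)]; simp only [Finset.card_empty] at hc ⊢; omega)]
        have hcA : A.card = N + 1 := by simp only [Finset.card_empty] at hc; omega
        rw [Finset.card_erase_of_mem (A.min'_mem hAne), hcA]
        simp [Nat.choose_self]
      · have hAne : A.Nonempty := Finset.nonempty_iff_ne_empty.2 hA
        have hBne : B.Nonempty := Finset.nonempty_iff_ne_empty.2 hB
        set a := A.min' hAne with ha
        set b := B.max' hBne with hb
        have hab : a ≠ b := by
          intro h
          exact Finset.disjoint_left.1 hd (A.min'_mem hAne) (by show a ∈ B; rw [h]; exact B.max'_mem hBne)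
        have hset : {w : List ℕ | InterP A B w} =
            (fun w => a :: w) '' {w : List ℕ | InterP (A.erase a) B w} ∪
            (fun w => b :: w) '' {w : List ℕ | InterP A (B.erase b) w} := by
          ext w
          simp only [Set.mem_setOf_eq, Set.mem_union, Set.mem_image]
          constructor
          · intro hw
            cases w with
            | nil => exact absurd hw.1 hA
            | cons s w' =>
              rcases hw with ⟨hs, hmin, hrec⟩ | ⟨hs, hmax, hrec⟩
              · have hsa : s = a := le_antisymm (hmin a (A.min'_mem hAne)) (A.min'_le s hs)
                subst hsa
                exact Or.inl ⟨w', hrec, rfl⟩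
              · have hsb : s = b := le_antisymm (B.le_max' s hs) (hmax b (B.max'_mem hBne))
                subst hsb
                exact Or.inr ⟨w', hrec, rfl⟩
          · rintro (⟨w', hw', rfl⟩ | ⟨w', hw', rfl⟩)
            · exact Or.inl ⟨A.min'_mem hAne, fun t ht => A.min'_le t ht, hw'⟩
            · exact Or.inr ⟨B.max'_mem hBne, fun t ht => B.le_max' t ht, hw'⟩
        have hd1 : Disjoint (A.erase a) B := hd.mono_left (Finset.erase_subset a A)
        have hd2 : Disjoint A (B.erase b) := hd.mono_right (Finset.erase_subset b B)
        have hdisjsets : Disjoint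
            ((fun w => a :: w) '' {w : List ℕ | InterP (A.erase a) B w})
            ((fun w => b :: w) '' {w : List ℕ | InterP A (B.erase b) w}) := by
          rw [Set.disjoint_left]
          rintro w ⟨w1, -, rfl⟩ ⟨w2, -, heq⟩
          rw [List.cons.injEq] at heq
          exact hab heq.1.symm
        rw [hset, Set.ncard_union_eq hdisjsets
          ((interP_finite _ _ hd1).image _) ((interP_finite _ _ hd2).image _)]
        rw [Set.ncard_image_of_injective _ (fun x y h => by simpa using h),
          Set.ncard_image_of_injective _ (fun x y h => by simpa using h)]
        have hcA : 1 ≤ A.card := Finset.card_pos.2 hAne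
        have hcB : 1 ≤ B.card := Finset.card_pos.2 hBne
        rw [ih (A.erase a) B hd1
          (by rw [Finset.card_erase_of_mem (A.min'_mem hAne)]; omega)]
        rw [ih A (B.erase b) hd2
          (by rw [Finset.card_erase_of_mem (B.max'_mem hBne)]; omega)]
        rw [Finset.card_erase_of_mem (A.min'_mem hAne)]
        obtain ⟨k, hk⟩ : ∃ k, A.card = k + 1 := ⟨A.card - 1, by omega⟩
        rw [hk]
        simp only [Nat.add_sub_cancel]
        rw [Nat.choose_succ_succ]

lemma bridge : ∀ (w : List ℕ) (m : ℕ) (A B : Finset ℕ), Disjoint A B →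
    A.card + B.card = m + 2 →
    (IsCPermA (LDiv m A B) w ↔ InterP A B w) := by
  intro w
  induction w with
  | nil =>
    intro m A B hd hc
    simp only [IsCPermA, InterP]
    constructor
    · intro h
      exfalso
      have hA : A = ∅ := h A (by simp [LDiv])
      have hB : B = ∅ := h B (by simp [LDiv])
      rw [hA, hB] at hc
      simp at hc
    · rintro ⟨rfl, rfl⟩
      simp at hc
  | cons s w ih =>
    intro m A B hd hc
    simp only [IsCPermA, InterP]
    constructor
    · rintro ⟨hadm, hrest⟩
      rcases adm_LDiv_iff.1 hadm with ⟨hsA, hmin⟩ | ⟨hsB, hmax⟩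
      · refine Or.inl ⟨hsA, hmin, ?_⟩
        have hcA : 1 ≤ A.card := Finset.card_pos.2 ⟨s, hsA⟩
        cases m with
        | zero =>
          rw [deleteA_min_zero hsA hmin] at hrest
          have hd' : Disjoint (A.erase s) B := hd.mono_left (Finset.erase_subset s A)
          have hcard1 : ((A.erase s) ∪ B).card = 1 := by
            rw [Finset.card_union_of_disjoint hd', Finset.card_erase_of_mem hsA]
            omega
          obtain ⟨t, ht⟩ := Finset.card_eq_one.1 hcard1
          rw [ht, isCPermA_singleton] at hrest
          exact (interP_single hd' ht w).2 hrest
        | succ k =>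
          rw [deleteA_min_succ hsA hmin] at hrest
          exact (ih k (A.erase s) B (hd.mono_left (Finset.erase_subset s A))
            (by rw [Finset.card_erase_of_mem hsA]; omega)).1 hrest
      · have hsA : s ∉ A := Finset.disjoint_right.1 hd hsB
        refine Or.inr ⟨hsB, hmax, ?_⟩
        have hcB : 1 ≤ B.card := Finset.card_pos.2 ⟨s, hsB⟩
        cases m with
        | zero =>
          rw [deleteA_max_zero hsA hsB hmax] at hrest
          have hd' : Disjoint A (B.erase s) := hd.mono_right (Finset.erase_subset s B)
          have hcard1 : (A ∪ B.erase s).card = 1 := by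
            rw [Finset.card_union_of_disjoint hd', Finset.card_erase_of_mem hsB]
            omega
          obtain ⟨t, ht⟩ := Finset.card_eq_one.1 hcard1
          rw [ht, isCPermA_singleton] at hrest
          exact (interP_single hd' ht w).2 hrest
        | succ k =>
          rw [deleteA_max_succ hsA hsB hmax] at hrest
          exact (ih k A (B.erase s) (hd.mono_right (Finset.erase_subset s B))
            (by rw [Finset.card_erase_of_mem hsB]; omega)).1 hrest
    · rintro (⟨hsA, hmin, hint⟩ | ⟨hsB, hmax, hint⟩)
      · refine ⟨adm_LDiv_iff.2 (Or.inl ⟨hsA, hmin⟩), ?_⟩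
        have hcA : 1 ≤ A.card := Finset.card_pos.2 ⟨s, hsA⟩
        cases m with
        | zero =>
          rw [deleteA_min_zero hsA hmin]
          have hd' : Disjoint (A.erase s) B := hd.mono_left (Finset.erase_subset s A)
          have hcard1 : ((A.erase s) ∪ B).card = 1 := by
            rw [Finset.card_union_of_disjoint hd', Finset.card_erase_of_mem hsA]
            omega
          obtain ⟨t, ht⟩ := Finset.card_eq_one.1 hcard1
          rw [ht, isCPermA_singleton]
          exact (interP_single hd' ht w).1 hint
        | succ k =>
          rw [deleteA_min_succ hsA hmin]
          exact (ih k (A.erase s) B (hd.mono_left (Finset.erase_subset s A))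
            (by rw [Finset.card_erase_of_mem hsA]; omega)).2 hint
      · have hsA : s ∉ A := Finset.disjoint_right.1 hd hsB
        refine ⟨adm_LDiv_iff.2 (Or.inr ⟨hsB, hmax⟩), ?_⟩
        have hcB : 1 ≤ B.card := Finset.card_pos.2 ⟨s, hsB⟩
        cases m with
        | zero =>
          rw [deleteA_max_zero hsA hsB hmax]
          have hd' : Disjoint A (B.erase s) := hd.mono_right (Finset.erase_subset s B)
          have hcard1 : (A ∪ B.erase s).card = 1 := by
            rw [Finset.card_union_of_disjoint hd', Finset.card_erase_of_mem hsB]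
            omega
          obtain ⟨t, ht⟩ := Finset.card_eq_one.1 hcard1
          rw [ht, isCPermA_singleton]
          exact (interP_single hd' ht w).1 hint
        | succ k =>
          rw [deleteA_max_succ hsA hsB hmax]
          exact (ih k A (B.erase s) (hd.mono_right (Finset.erase_subset s B))
            (by rw [Finset.card_erase_of_mem hsB]; omega)).2 hint

/-- for `C = (C₁, ∅, …, ∅, C_n)`, a permutation of `S` is a
`C`-permutation iff the elements of `C₁` appear in ascending order and the elements of
`C_n` appear in descending order; hence there are `C(n, |C₁|)` of them. -/
theorem cperm_first_last (n : ℕ) (hn : 2 ≤ n) (S C₁ Cn : Finset ℕ) (hS : S.card = n)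
    (hC : IsDivision (C₁ :: (List.replicate (n - 2) ∅ ++ [Cn])) S) :
    (∀ w : List ℕ, w.Perm S.toList →
      (IsCPermA (C₁ :: (List.replicate (n - 2) ∅ ++ [Cn])) w ↔
        (w.filter (fun s => decide (s ∈ C₁))).Pairwise (· < ·) ∧
        (w.filter (fun s => decide (s ∈ Cn))).Pairwise (· > ·))) ∧
    Nat.card {w : List ℕ // IsCPermA (C₁ :: (List.replicate (n - 2) ∅ ++ [Cn])) w} =
      Nat.choose n C₁.card := by
  have hL : C₁ :: (List.replicate (n - 2) ∅ ++ [Cn]) = LDiv (n - 2) C₁ Cn := rfl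
  rw [hL] at hC ⊢
  have hlen : (LDiv (n - 2) C₁ Cn).length = n := by rw [LDiv_length]; omega
  have horder : ∀ a ∈ C₁, ∀ b ∈ Cn, a < b := by
    intro a haa b hbb
    have h := hC.2.2 0 (n - 1) (by omega) (by rw [hlen]; omega)
    apply h
    · rw [getD_LDiv]; simpa using haa
    · rw [getD_LDiv, if_neg (by omega : ¬(n - 1 = 0)),
        if_pos (by omega : n - 1 = (n - 2) + 1)]
      exact hbb
  have hdisj : Disjoint C₁ Cn :=
    Finset.disjoint_left.2 fun a ha hb => absurd (horder a ha a hb) (lt_irrefl a)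
  have hunion : C₁ ∪ Cn = S := by
    apply Finset.Subset.antisymm
    · apply Finset.union_subset
      · have h := hC.2.1 0 (by rw [hlen]; omega)
        rw [getD_LDiv] at h
        simpa using h
      · have h := hC.2.1 (n - 1) (by rw [hlen]; omega)
        rw [getD_LDiv, if_neg (by omega : ¬(n - 1 = 0)),
          if_pos (by omega : n - 1 = (n - 2) + 1)] at h
        exact h
    · intro x hx
      obtain ⟨i, hi, hmem⟩ := hC.1 x hx
      rw [hlen] at hi
      rw [getD_LDiv] at hmem
      split_ifs at hmem with h0 h1
      · exact Finset.mem_union_left _ hmem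
      · exact Finset.mem_union_right _ hmem
      · exact absurd hmem (Finset.notMem_empty x)
  have hsub1 : C₁ ⊆ S := hunion ▸ Finset.subset_union_left
  have hsub2 : Cn ⊆ S := hunion ▸ Finset.subset_union_right
  have hcards : C₁.card + Cn.card = n := by
    rw [← Finset.card_union_of_disjoint hdisj, hunion, hS]
  have hcards' : C₁.card + Cn.card = (n - 2) + 2 := by omega
  constructor
  · intro w hw
    rw [bridge w (n - 2) C₁ Cn hdisj hcards']
    have hmemw : ∀ x, x ∈ w ↔ x ∈ S := fun x => by
      rw [hw.mem_iff, Finset.mem_toList]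
    have hnodup : w.Nodup := hw.nodup_iff.2 (Finset.nodup_toList S)
    constructor
    · intro h
      obtain ⟨h1, h2⟩ := interP_filter hdisj h
      constructor
      · rw [h1]; exact (Finset.sortedLT_sort _).pairwise
      · have h2' : w.filter (fun x => decide (x ∈ Cn)) = (Cn.sort (· ≤ ·)).reverse := by
          rw [← h2, List.reverse_reverse]
        rw [h2']
        exact List.pairwise_reverse.2 (Finset.sortedLT_sort _).pairwise
    · rintro ⟨hs1, hs2⟩
      apply interP_of_filters hdisj
      · rw [hunion]; exact hw
      · refine (fun (hp : List.Perm _ _) (hs : List.Pairwise (· < ·) _) => List.Perm.eq_of_pairwise' (hs.imp le_of_lt) ((Finset.sortedLT_sort _).pairwise.imp le_of_lt) hp) ?_ hs1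
        rw [List.perm_ext_iff_of_nodup (hnodup.filter _) (Finset.sort_nodup _ _)]
        intro a
        simp only [List.mem_filter, decide_eq_true_eq, Finset.mem_sort]
        constructor
        · rintro ⟨-, h2⟩; exact h2
        · intro h2; exact ⟨(hmemw a).2 (hsub1 h2), h2⟩
      · refine (fun (hp : List.Perm _ _) (hs : List.Pairwise (· < ·) _) => List.Perm.eq_of_pairwise' (hs.imp le_of_lt) ((Finset.sortedLT_sort _).pairwise.imp le_of_lt) hp) ?_ ?_
        · refine ((w.filter _).reverse_perm).trans ?_
          rw [List.perm_ext_iff_of_nodup (hnodup.filter _) (Finset.sort_nodup _ _)]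
          intro a
          simp only [List.mem_filter, decide_eq_true_eq, Finset.mem_sort]
          constructor
          · rintro ⟨-, h2⟩; exact h2
          · intro h2; exact ⟨(hmemw a).2 (hsub2 h2), h2⟩
        · exact List.pairwise_reverse.2 hs2
  · calc Nat.card {w : List ℕ // IsCPermA (LDiv (n - 2) C₁ Cn) w}
        = Nat.card {w : List ℕ // InterP C₁ Cn w} :=
          Nat.card_congr (Equiv.subtypeEquivRight
            (fun w => bridge w (n - 2) C₁ Cn hdisj hcards'))
      _ = {w : List ℕ | InterP C₁ Cn w}.ncard := Nat.card_coe_set_eq _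
      _ = n.choose C₁.card := interP_ncard n C₁ Cn hdisj hcards

end MixedEulerian
end

section
/- Let 1 ≤ k ≤ n and let C = (∅,...,∅, {1,...,n}, ∅,...,∅) be the division of {1,...,n} with all elements in position k. Then a permutation w ∈ S_n is a C-permutation if and only if w has exactly k-1 descents. Consequently, the number of C-permutations equals the Eulerian number A(n,k). -/
open scoped Pointwise
open MeasureTheory Nat

namespace MixedEulerian

-- AUX START
section Aux

open List

def sh1 (e f : ℕ) (A B : Finset ℕ) : List (Finset ℕ) :=
  List.replicate e ∅ ++ A :: B :: List.replicate f ∅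

def sh2 (f : ℕ) (B : Finset ℕ) : List (Finset ℕ) := B :: List.replicate f ∅

def sh3 (e : ℕ) (A : Finset ℕ) : List (Finset ℕ) := List.replicate e ∅ ++ [A]

lemma length_sh1 (e f : ℕ) (A B : Finset ℕ) : (sh1 e f A B).length = e + f + 2 := by
  simp [sh1]; omega

lemma length_sh2 (f : ℕ) (B : Finset ℕ) : (sh2 f B).length = f + 1 := by simp [sh2]

lemma length_sh3 (e : ℕ) (A : Finset ℕ) : (sh3 e A).length = e + 1 := by simp [sh3]

lemma findIdx_rep_append (p : Finset ℕ → Bool) (hp : p ∅ = false) (e : ℕ)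
    (l : List (Finset ℕ)) :
    List.findIdx p (List.replicate e ∅ ++ l) = e + List.findIdx p l := by
  induction e with
  | zero => simp
  | succ e ih =>
      rw [List.replicate_succ, List.cons_append, List.findIdx_cons, hp, ih]
      simp; omega

lemma getD_rep : ∀ (e i : ℕ), (List.replicate e (∅ : Finset ℕ)).getD i ∅ = ∅
  | 0, _ => by simp
  | e+1, 0 => by simp [List.replicate_succ]
  | e+1, i+1 => by rw [List.replicate_succ, List.getD_cons_succ]; exact getD_rep e i

lemma getD_rep_append (e : ℕ) (l : List (Finset ℕ)) (i : ℕ) :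
    (List.replicate e ∅ ++ l).getD i ∅ = if i < e then ∅ else l.getD (i - e) ∅ := by
  rcases lt_or_ge i e with h | h
  · rw [List.getD_append _ _ _ _ (by simpa using h), getD_rep, if_pos h]
  · rw [List.getD_append_right _ _ _ _ (by simpa using h), if_neg (not_lt.2 h)]
    simp

lemma getD_sh1 (e f : ℕ) (A B : Finset ℕ) (i : ℕ) :
    (sh1 e f A B).getD i ∅ = if i = e then A else if i = e + 1 then B else ∅ := by
  rw [sh1, getD_rep_append]
  by_cases h1 : i < e
  · rw [if_pos h1, if_neg (by omega), if_neg (by omega)]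
  · rw [if_neg h1]
    by_cases h2 : i = e
    · subst h2; simp
    · by_cases h3 : i = e + 1
      · subst h3; rw [if_pos rfl] at *
        have : e + 1 - e = 1 := by omega
        rw [if_neg h2, this]; rfl
      · rw [if_neg h2, if_neg h3]
        obtain ⟨j, hj⟩ : ∃ j, i - e = j + 2 := ⟨i - e - 2, by omega⟩
        rw [hj, List.getD_cons_succ, List.getD_cons_succ, getD_rep]

lemma getD_sh2 (f : ℕ) (B : Finset ℕ) (i : ℕ) :
    (sh2 f B).getD i ∅ = if i = 0 then B else ∅ := by
  rcases i with _ | i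
  · rfl
  · rw [sh2, List.getD_cons_succ, getD_rep, if_neg (by omega)]

lemma getD_sh3 (e : ℕ) (A : Finset ℕ) (i : ℕ) :
    (sh3 e A).getD i ∅ = if i = e then A else ∅ := by
  rw [sh3, getD_rep_append]
  by_cases h1 : i < e
  · rw [if_pos h1, if_neg (by omega)]
  · rw [if_neg h1]
    by_cases h2 : i = e
    · subst h2; simp
    · rw [if_neg h2]
      obtain ⟨j, hj⟩ : ∃ j, i - e = j + 1 := ⟨i - e - 1, by omega⟩
      rw [hj, List.getD_cons_succ]
      simp


lemma findIdx_sh1_A {s : ℕ} {A B : Finset ℕ} (e f : ℕ) (hs : s ∈ A) :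
    (sh1 e f A B).findIdx (fun b => decide (s ∈ b)) = e := by
  rw [sh1, findIdx_rep_append _ (by simp) , List.findIdx_cons]
  simp [hs]

lemma findIdx_sh1_B {s : ℕ} {A B : Finset ℕ} (e f : ℕ) (hsA : s ∉ A) (hs : s ∈ B) :
    (sh1 e f A B).findIdx (fun b => decide (s ∈ b)) = e + 1 := by
  rw [sh1, findIdx_rep_append _ (by simp), List.findIdx_cons, List.findIdx_cons]
  simp [hs, hsA]

lemma findIdx_sh2 {s : ℕ} {B : Finset ℕ} (f : ℕ) (hs : s ∈ B) :
    (sh2 f B).findIdx (fun b => decide (s ∈ b)) = 0 := by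
  rw [sh2, List.findIdx_cons]; simp [hs]

lemma findIdx_sh3 {s : ℕ} {A : Finset ℕ} (e : ℕ) (hs : s ∈ A) :
    (sh3 e A).findIdx (fun b => decide (s ∈ b)) = e := by
  rw [sh3, findIdx_rep_append _ (by simp), List.findIdx_cons]
  simp [hs]

lemma listDescents_cons (s h : ℕ) (t : List ℕ) :
    listDescents (s :: h :: t) = listDescents (h :: t) + (if h < s then 1 else 0) := by
  simp [listDescents, List.countP_cons]

lemma listDescents_single (s : ℕ) : listDescents [s] = 0 := rfl

lemma listDescents_le (h : ℕ) (t : List ℕ) : listDescents (h :: t) ≤ t.length := by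
  have h1 : listDescents (h :: t) ≤ ((h :: t).zip t).length :=
    List.countP_le_length
  rw [List.length_zip] at h1
  simp at h1
  omega

lemma le_of_descents_zero : ∀ (l : List ℕ) (s : ℕ),
    listDescents (s :: l) = 0 → ∀ t ∈ l, s ≤ t := by
  intro l
  induction l with
  | nil => intro s _ t ht; simp at ht
  | cons h t ih =>
      intro s hd u hu
      rw [listDescents_cons] at hd
      have h1 : ¬ h < s := by by_contra hc; rw [if_pos hc] at hd; omega
      have h2 : listDescents (h :: t) = 0 := by omega
      rcases List.mem_cons.1 hu with rfl | hu
      · omega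
      · exact le_trans (not_lt.1 h1) (ih h h2 u hu)

lemma lt_of_descents_max : ∀ (l : List ℕ) (s : ℕ),
    listDescents (s :: l) = l.length → ∀ t ∈ l, t < s := by
  intro l
  induction l with
  | nil => intro s _ t ht; simp at ht
  | cons h t ih =>
      intro s hd u hu
      rw [listDescents_cons] at hd
      have hle := listDescents_le h t
      have h1 : h < s := by
        by_contra hc; rw [if_neg hc] at hd; simp at hd; omega
      have h2 : listDescents (h :: t) = t.length := by
        rw [if_pos h1] at hd; simp at hd; omega
      rcases List.mem_cons.1 hu with rfl | hu
      · exact h1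
      · exact lt_trans (ih h h2 u hu) h1


lemma adm_sh1_A_pos {s : ℕ} {A B : Finset ℕ} (e f : ℕ) (hs : s ∈ A) :
    AdmissibleA (sh1 (e+1) f A B) s := by
  refine ⟨e + 1, ?_, ?_, Or.inr (Or.inr ⟨by omega, ?_⟩)⟩
  · rw [length_sh1]; omega
  · rw [getD_sh1, if_pos rfl]; exact hs
  · rw [length_sh1]; omega

lemma adm_sh1_B_mid {s : ℕ} {A B : Finset ℕ} (e f : ℕ) (hs : s ∈ B) (hsA : s ∉ A) :
    AdmissibleA (sh1 e (f+1) A B) s := by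
  refine ⟨e + 1, ?_, ?_, Or.inr (Or.inr ⟨by omega, ?_⟩)⟩
  · rw [length_sh1]; omega
  · rw [getD_sh1, if_neg (by omega), if_pos rfl]; exact hs
  · rw [length_sh1]; omega

lemma adm_sh1_A0_iff {s : ℕ} {A B : Finset ℕ} (f : ℕ) (hs : s ∈ A) (hsB : s ∉ B) :
    AdmissibleA (sh1 0 f A B) s ↔ ∀ t ∈ A, s ≤ t := by
  constructor
  · rintro ⟨i, hi, hmem, hcond⟩
    rw [getD_sh1] at hmem
    rw [length_sh1] at hi hcond
    have hi0 : i = 0 := by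
      by_cases h0 : i = 0
      · exact h0
      · exfalso
        by_cases h1 : i = 1
        · subst h1; rw [if_neg (by omega), if_pos rfl] at hmem; exact hsB hmem
        · rw [if_neg h0, if_neg (by omega)] at hmem; simp at hmem
    subst hi0
    rcases hcond with ⟨_, hmin⟩ | ⟨h01, _⟩ | ⟨h0, _⟩
    · intro t ht
      exact hmin t (by rw [getD_sh1, if_pos rfl]; exact ht)
    · omega
    · omega
  · intro hmin
    refine ⟨0, by rw [length_sh1]; omega, by rw [getD_sh1]; simpa using hs,
      Or.inl ⟨rfl, ?_⟩⟩
    intro t ht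
    rw [getD_sh1, if_pos rfl] at ht
    exact hmin t ht

lemma adm_sh1_B_last_iff {s : ℕ} {A B : Finset ℕ} (e : ℕ) (hs : s ∈ B) (hsA : s ∉ A) :
    AdmissibleA (sh1 e 0 A B) s ↔ ∀ t ∈ B, t ≤ s := by
  constructor
  · rintro ⟨i, hi, hmem, hcond⟩
    rw [getD_sh1] at hmem
    rw [length_sh1] at hi hcond
    have hi1 : i = e + 1 := by
      by_cases h1 : i = e + 1
      · exact h1
      · exfalso
        by_cases h0 : i = e
        · subst h0; rw [if_pos rfl] at hmem; exact hsA hmem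
        · rw [if_neg h0, if_neg h1] at hmem; simp at hmem
    subst hi1
    rcases hcond with ⟨h0, _⟩ | ⟨_, hmax⟩ | ⟨_, hlt⟩
    · omega
    · intro t ht
      exact hmax t (by rw [getD_sh1, if_neg (by omega), if_pos rfl]; exact ht)
    · omega
  · intro hmax
    refine ⟨e + 1, by rw [length_sh1]; omega,
      by rw [getD_sh1, if_neg (by omega), if_pos rfl]; exact hs,
      Or.inr (Or.inl ⟨by rw [length_sh1]; omega, ?_⟩)⟩
    intro t ht
    rw [getD_sh1, if_neg (by omega), if_pos rfl] at ht
    exact hmax t ht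

lemma adm_sh2_pos_iff {s : ℕ} {B : Finset ℕ} (f : ℕ) (hs : s ∈ B) :
    AdmissibleA (sh2 (f+1) B) s ↔ ∀ t ∈ B, s ≤ t := by
  constructor
  · rintro ⟨i, hi, hmem, hcond⟩
    rw [getD_sh2] at hmem
    rw [length_sh2] at hi hcond
    have hi0 : i = 0 := by
      by_contra h0; rw [if_neg h0] at hmem; simp at hmem
    subst hi0
    rcases hcond with ⟨_, hmin⟩ | ⟨h01, _⟩ | ⟨h0, _⟩
    · intro t ht
      exact hmin t (by rw [getD_sh2, if_pos rfl]; exact ht)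
    · omega
    · omega
  · intro hmin
    refine ⟨0, by rw [length_sh2]; omega, by rw [getD_sh2]; simpa using hs,
      Or.inl ⟨rfl, ?_⟩⟩
    intro t ht
    rw [getD_sh2, if_pos rfl] at ht
    exact hmin t ht

lemma adm_sh3_pos_iff {s : ℕ} {A : Finset ℕ} (e : ℕ) (hs : s ∈ A) :
    AdmissibleA (sh3 (e+1) A) s ↔ ∀ t ∈ A, t ≤ s := by
  constructor
  · rintro ⟨i, hi, hmem, hcond⟩
    rw [getD_sh3] at hmem
    rw [length_sh3] at hi hcond
    have hi1 : i = e + 1 := by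
      by_contra h1; rw [if_neg h1] at hmem; simp at hmem
    subst hi1
    rcases hcond with ⟨h0, _⟩ | ⟨_, hmax⟩ | ⟨_, hlt⟩
    · omega
    · intro t ht
      exact hmax t (by rw [getD_sh3, if_pos rfl]; exact ht)
    · omega
  · intro hmax
    refine ⟨e + 1, by rw [length_sh3]; omega,
      by rw [getD_sh3, if_pos rfl]; exact hs,
      Or.inr (Or.inl ⟨by rw [length_sh3]; omega, ?_⟩)⟩
    intro t ht
    rw [getD_sh3, if_pos rfl] at ht
    exact hmax t ht


lemma deleteA_mid_eq (C : List (Finset ℕ)) (s : ℕ) {i : ℕ}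
    (hi : C.findIdx (fun b => decide (s ∈ b)) = i)
    (hlen : 1 < C.length) (h0 : i ≠ 0) (hl : i ≠ C.length - 1) :
    deleteA C s = C.take (i-1) ++
      [C.getD (i-1) ∅ ∪ (C.getD i ∅).filter (fun t => t < s),
       (C.getD i ∅).filter (fun t => s < t) ∪ C.getD (i+1) ∅] ++ C.drop (i+2) := by
  simp only [deleteA, hi, if_neg (by omega : ¬ C.length ≤ 1), if_neg h0, if_neg hl]

lemma deleteA_first_eq (C : List (Finset ℕ)) (s : ℕ)
    (hi : C.findIdx (fun b => decide (s ∈ b)) = 0)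
    (hlen : 1 < C.length) :
    deleteA C s = ((C.getD 0 ∅).filter (fun t => s < t) ∪ C.getD 1 ∅) :: C.drop 2 := by
  simp only [deleteA, hi, if_neg (by omega : ¬ C.length ≤ 1), if_pos rfl, if_true]

lemma deleteA_last_eq (C : List (Finset ℕ)) (s : ℕ) {i : ℕ}
    (hi : C.findIdx (fun b => decide (s ∈ b)) = i)
    (hlen : 1 < C.length) (h0 : i ≠ 0) (hl : i = C.length - 1) :
    deleteA C s = C.take (i-1) ++
      [C.getD (i-1) ∅ ∪ (C.getD i ∅).filter (fun t => t < s)] := by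
  simp only [deleteA, hi, if_neg (by omega : ¬ C.length ≤ 1), if_neg h0, if_pos hl]

lemma deleteA_short_eq (C : List (Finset ℕ)) (s : ℕ) (hlen : C.length ≤ 1) :
    deleteA C s = [] := by
  simp only [deleteA, if_pos hlen]


lemma sh1_succ_e (e f : ℕ) (A B : Finset ℕ) :
    sh1 (e+1) f A B = List.replicate e ∅ ++ ∅ :: A :: B :: List.replicate f ∅ := by
  rw [sh1, List.replicate_succ', List.append_assoc]; rfl

lemma sh3_succ_e (e : ℕ) (A : Finset ℕ) :
    sh3 (e+1) A = List.replicate e ∅ ++ ∅ :: [A] := by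
  rw [sh3, List.replicate_succ', List.append_assoc]; rfl

lemma deleteA_sh1_A_mid {s : ℕ} {A B : Finset ℕ} (e f : ℕ) (hs : s ∈ A) :
    deleteA (sh1 (e+1) f A B) s
      = sh1 e f (A.filter (fun t => t < s)) (A.filter (fun t => s < t) ∪ B) := by
  rw [deleteA_mid_eq _ s (findIdx_sh1_A (e+1) f hs)
      (by rw [length_sh1]; omega) (by omega) (by rw [length_sh1]; omega)]
  rw [show e + 1 - 1 = e from rfl]
  rw [getD_sh1, if_neg (by omega), if_neg (by omega)]
  rw [getD_sh1, if_pos rfl]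
  rw [getD_sh1, if_neg (by omega), if_pos rfl]
  rw [sh1_succ_e]
  rw [List.take_left' (by simp)]
  have h3 : e + 1 + 2 = (List.replicate e (∅ : Finset ℕ)).length + 3 := by simp
  rw [h3, List.drop_append]
  simp [sh1]

lemma deleteA_sh1_B_mid {s : ℕ} {A B : Finset ℕ} (e f : ℕ) (hsA : s ∉ A) (hs : s ∈ B) :
    deleteA (sh1 e (f+1) A B) s
      = sh1 e f (A ∪ B.filter (fun t => t < s)) (B.filter (fun t => s < t)) := by
  rw [deleteA_mid_eq _ s (findIdx_sh1_B e (f+1) hsA hs)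
      (by rw [length_sh1]; omega) (by omega) (by rw [length_sh1]; omega)]
  rw [show e + 1 - 1 = e from rfl]
  rw [getD_sh1, if_pos rfl]
  rw [getD_sh1, if_neg (by omega), if_pos rfl]
  rw [getD_sh1, if_neg (by omega), if_neg (by omega)]
  rw [sh1, List.take_left' (by simp)]
  have h3 : e + 1 + 2 = (List.replicate e (∅ : Finset ℕ)).length + 3 := by simp
  rw [h3, List.drop_append]
  simp [sh1, List.replicate_succ]

lemma deleteA_sh1_A0 {s : ℕ} {A B : Finset ℕ} (f : ℕ) (hs : s ∈ A) :
    deleteA (sh1 0 f A B) s = sh2 f (A.filter (fun t => s < t) ∪ B) := by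
  rw [deleteA_first_eq _ s (findIdx_sh1_A 0 f hs) (by rw [length_sh1]; omega)]
  rw [getD_sh1, if_pos rfl]
  rw [getD_sh1, if_neg (by omega), if_pos rfl]
  simp [sh1, sh2]

lemma deleteA_sh1_B_last {s : ℕ} {A B : Finset ℕ} (e : ℕ) (hsA : s ∉ A) (hs : s ∈ B) :
    deleteA (sh1 e 0 A B) s = sh3 e (A ∪ B.filter (fun t => t < s)) := by
  rw [deleteA_last_eq _ s (findIdx_sh1_B e 0 hsA hs)
      (by rw [length_sh1]; omega) (by omega) (by rw [length_sh1]; omega)]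
  rw [show e + 1 - 1 = e from rfl]
  rw [getD_sh1, if_pos rfl]
  rw [getD_sh1, if_neg (by omega), if_pos rfl]
  rw [sh1, List.take_left' (by simp)]
  rfl

lemma deleteA_sh2_succ {s : ℕ} {B : Finset ℕ} (f : ℕ) (hs : s ∈ B) :
    deleteA (sh2 (f+1) B) s = sh2 f (B.filter (fun t => s < t)) := by
  rw [deleteA_first_eq _ s (findIdx_sh2 (f+1) hs) (by rw [length_sh2]; omega)]
  rw [getD_sh2, if_pos rfl]
  rw [getD_sh2, if_neg (by omega)]
  simp [sh2, List.replicate_succ]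

lemma deleteA_sh3_succ {s : ℕ} {A : Finset ℕ} (e : ℕ) (hs : s ∈ A) :
    deleteA (sh3 (e+1) A) s = sh3 e (A.filter (fun t => t < s)) := by
  rw [deleteA_last_eq _ s (findIdx_sh3 (e+1) hs)
      (by rw [length_sh3]; omega) (by omega) (by rw [length_sh3]; omega)]
  rw [show e + 1 - 1 = e from rfl]
  rw [getD_sh3, if_neg (by omega)]
  rw [getD_sh3, if_pos rfl]
  rw [sh3_succ_e, List.take_left' (by simp)]
  simp [sh3]


lemma isCPermA_nil_iff (C : List (Finset ℕ)) :
    IsCPermA C [] ↔ ∀ B ∈ C, B = ∅ := Iff.rfl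

lemma isCPermA_cons_iff (C : List (Finset ℕ)) (s : ℕ) (w : List ℕ) :
    IsCPermA C (s :: w) ↔ AdmissibleA C s ∧ IsCPermA (deleteA C s) w := Iff.rfl

lemma not_isCPermA_nil_cons (s : ℕ) (w : List ℕ) : ¬ IsCPermA [] (s :: w) := by
  rintro ⟨⟨i, hi, -⟩, -⟩
  simp at hi

lemma perm2 : ∀ (w : List ℕ) (f : ℕ) (B : Finset ℕ), B.card = f + 1 →
    (IsCPermA (sh2 f B) w ↔
      (w.length = f + 1 ∧ w.Nodup ∧ (∀ t, t ∈ w ↔ t ∈ B) ∧ listDescents w = 0)) := by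
  intro w
  induction w with
  | nil =>
      intro f B hB
      rw [isCPermA_nil_iff]
      constructor
      · intro h
        have : B = ∅ := h B (by simp [sh2])
        rw [this] at hB; simp at hB
      · rintro ⟨hl, -⟩; simp at hl
  | cons s w ih =>
      intro f B hB
      rw [isCPermA_cons_iff]
      by_cases hs : s ∈ B
      · rcases f with _ | f
        · -- B = {b}
          obtain ⟨b, rfl⟩ := Finset.card_eq_one.1 hB
          have hsb : s = b := by simpa using hs
          subst hsb
          rw [deleteA_short_eq _ _ (by rw [length_sh2])]
          constructor
          · rintro ⟨-, hrest⟩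
            cases w with
            | nil =>
                refine ⟨rfl, by simp, ?_, rfl⟩
                intro t; simp
            | cons t w' => exact absurd hrest (not_isCPermA_nil_cons t w')
          · rintro ⟨hl, -, -, -⟩
            have hw : w = [] := by
              cases w with
              | nil => rfl
              | cons t w' => simp at hl
            subst hw
            refine ⟨⟨0, by rw [length_sh2]; omega, by rw [getD_sh2]; simp,
              Or.inl ⟨rfl, ?_⟩⟩, by simp [isCPermA_nil_iff]⟩
            intro t ht
            rw [getD_sh2, if_pos rfl] at ht
            simp at ht
            omega
        · -- f + 1
          rw [deleteA_sh2_succ f hs, adm_sh2_pos_iff f hs]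
          have hwne : ∀ (P : Prop), ((s :: w).length = f + 1 + 1 → P) →
              ((s :: w).length = f + 1 + 1 ∧ P → True) := fun _ _ _ => trivial
          constructor
          · rintro ⟨hmin, hrest⟩
            have hfil : B.filter (fun t => s < t) = B.erase s := by
              ext t
              simp only [Finset.mem_filter, Finset.mem_erase]
              constructor
              · rintro ⟨ht, hlt⟩; exact ⟨by omega, ht⟩
              · rintro ⟨hne, ht⟩
                exact ⟨ht, lt_of_le_of_ne (hmin t ht) (Ne.symm hne)⟩
            have hcard' : (B.filter (fun t => s < t)).card = f + 1 := by
              rw [hfil, Finset.card_erase_of_mem hs, hB]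
              omega
            obtain ⟨hl, hnd, hmem, hdes⟩ := (ih f _ hcard').1 hrest
            have hsnotw : s ∉ w := by
              intro hsw
              have := (hmem s).1 hsw
              rw [hfil, Finset.mem_erase] at this
              exact this.1 rfl
            refine ⟨by simp [hl], List.nodup_cons.2 ⟨hsnotw, hnd⟩, ?_, ?_⟩
            · intro t
              simp only [List.mem_cons]
              constructor
              · rintro (rfl | htw)
                · exact hs
                · exact Finset.mem_of_mem_erase (hfil ▸ (hmem t).1 htw)
              · intro htB
                rcases eq_or_ne t s with rfl | hne
                · exact Or.inl rfl
                · refine Or.inr ((hmem t).2 ?_)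
                  rw [hfil, Finset.mem_erase]; exact ⟨hne, htB⟩
            · cases w with
              | nil => simp at hl
              | cons h t =>
                  rw [listDescents_cons, hdes]
                  have : h ∈ B.filter (fun t => s < t) := (hmem h).1 (by simp)
                  rw [Finset.mem_filter] at this
                  rw [if_neg (by omega)]
          · rintro ⟨hl, hnd, hmem, hdes⟩
            have hsnotw : s ∉ w := (List.nodup_cons.1 hnd).1
            have hmin : ∀ t ∈ B, s ≤ t := by
              intro t ht
              rcases eq_or_ne t s with rfl | hne
              · exact le_refl _
              · have htw : t ∈ w := by
                  have := (hmem t).2 ht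
                  rcases List.mem_cons.1 this with rfl | h
                  · exact absurd rfl hne
                  · exact h
                exact le_of_descents_zero w s hdes t htw
            have hfil : B.filter (fun t => s < t) = B.erase s := by
              ext t
              simp only [Finset.mem_filter, Finset.mem_erase]
              constructor
              · rintro ⟨ht, hlt⟩; exact ⟨by omega, ht⟩
              · rintro ⟨hne, ht⟩
                exact ⟨ht, lt_of_le_of_ne (hmin t ht) (Ne.symm hne)⟩
            have hcard' : (B.filter (fun t => s < t)).card = f + 1 := by
              rw [hfil, Finset.card_erase_of_mem hs, hB]
              omega
            refine ⟨hmin, (ih f _ hcard').2 ⟨by simpa using hl, hnd.of_cons, ?_, ?_⟩⟩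
            · intro t
              rw [hfil, Finset.mem_erase]
              constructor
              · intro htw
                refine ⟨?_, (hmem t).1 (List.mem_cons_of_mem _ htw)⟩
                rintro rfl; exact hsnotw htw
              · rintro ⟨hne, htB⟩
                rcases List.mem_cons.1 ((hmem t).2 htB) with rfl | h
                · exact absurd rfl hne
                · exact h
            · cases w with
              | nil => rfl
              | cons h t =>
                  rw [listDescents_cons] at hdes
                  omega
      · -- s ∉ B : both sides false
        constructor
        · rintro ⟨⟨i, hi, hmem, -⟩, -⟩
          exfalso
          rw [getD_sh2] at hmem
          by_cases h0 : i = 0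
          · rw [if_pos h0] at hmem; exact hs hmem
          · rw [if_neg h0] at hmem; simp at hmem
        · rintro ⟨-, -, hmem, -⟩
          exact absurd ((hmem s).1 (by simp)) hs


lemma perm3 : ∀ (w : List ℕ) (e : ℕ) (A : Finset ℕ), A.card = e + 1 →
    (IsCPermA (sh3 e A) w ↔
      (w.length = e + 1 ∧ w.Nodup ∧ (∀ t, t ∈ w ↔ t ∈ A) ∧ listDescents w = e)) := by
  intro w
  induction w with
  | nil =>
      intro e A hA
      rw [isCPermA_nil_iff]
      constructor
      · intro h
        have : A = ∅ := h A (by simp [sh3])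
        rw [this] at hA; simp at hA
      · rintro ⟨hl, -⟩; simp at hl
  | cons s w ih =>
      intro e A hA
      rw [isCPermA_cons_iff]
      by_cases hs : s ∈ A
      · rcases e with _ | e
        · obtain ⟨b, rfl⟩ := Finset.card_eq_one.1 hA
          have hsb : s = b := by simpa using hs
          subst hsb
          rw [deleteA_short_eq _ _ (by rw [length_sh3])]
          constructor
          · rintro ⟨-, hrest⟩
            cases w with
            | nil =>
                refine ⟨rfl, by simp, ?_, rfl⟩
                intro t; simp
            | cons t w' => exact absurd hrest (not_isCPermA_nil_cons t w')
          · rintro ⟨hl, -, -, -⟩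
            have hw : w = [] := by
              cases w with
              | nil => rfl
              | cons t w' => simp at hl
            subst hw
            refine ⟨⟨0, by rw [length_sh3]; omega, by rw [getD_sh3]; simp,
              Or.inl ⟨rfl, ?_⟩⟩, by simp [isCPermA_nil_iff]⟩
            intro t ht
            rw [getD_sh3, if_pos rfl] at ht
            simp at ht
            omega
        · rw [deleteA_sh3_succ e hs, adm_sh3_pos_iff e hs]
          have hfilc : ∀ (hmax : ∀ t ∈ A, t ≤ s),
              A.filter (fun t => t < s) = A.erase s := by
            intro hmax
            ext t
            simp only [Finset.mem_filter, Finset.mem_erase]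
            constructor
            · rintro ⟨ht, hlt⟩; exact ⟨by omega, ht⟩
            · rintro ⟨hne, ht⟩
              exact ⟨ht, lt_of_le_of_ne (hmax t ht) hne⟩
          constructor
          · rintro ⟨hmax, hrest⟩
            have hfil := hfilc hmax
            have hcard' : (A.filter (fun t => t < s)).card = e + 1 := by
              rw [hfil, Finset.card_erase_of_mem hs, hA]
              omega
            obtain ⟨hl, hnd, hmem, hdes⟩ := (ih e _ hcard').1 hrest
            have hsnotw : s ∉ w := by
              intro hsw
              have := (hmem s).1 hsw
              rw [hfil, Finset.mem_erase] at this
              exact this.1 rfl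
            refine ⟨by simp [hl], List.nodup_cons.2 ⟨hsnotw, hnd⟩, ?_, ?_⟩
            · intro t
              simp only [List.mem_cons]
              constructor
              · rintro (rfl | htw)
                · exact hs
                · exact Finset.mem_of_mem_erase (hfil ▸ (hmem t).1 htw)
              · intro htA
                rcases eq_or_ne t s with rfl | hne
                · exact Or.inl rfl
                · refine Or.inr ((hmem t).2 ?_)
                  rw [hfil, Finset.mem_erase]; exact ⟨hne, htA⟩
            · cases w with
              | nil => simp at hl
              | cons h t =>
                  rw [listDescents_cons, hdes]
                  have : h ∈ A.filter (fun t => t < s) := (hmem h).1 (by simp)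
                  rw [Finset.mem_filter] at this
                  rw [if_pos this.2]
          · rintro ⟨hl, hnd, hmem, hdes⟩
            have hsnotw : s ∉ w := (List.nodup_cons.1 hnd).1
            have hwlen : w.length = e + 1 := by simpa using hl
            have hltw : ∀ t ∈ w, t < s := by
              intro t htw
              exact lt_of_descents_max w s (by rw [hwlen]; exact hdes) t htw
            have hmax : ∀ t ∈ A, t ≤ s := by
              intro t ht
              rcases eq_or_ne t s with rfl | hne
              · exact le_refl _
              · have htw : t ∈ w := by
                  rcases List.mem_cons.1 ((hmem t).2 ht) with rfl | h
                  · exact absurd rfl hne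
                  · exact h
                exact le_of_lt (hltw t htw)
            have hfil := hfilc hmax
            have hcard' : (A.filter (fun t => t < s)).card = e + 1 := by
              rw [hfil, Finset.card_erase_of_mem hs, hA]
              omega
            refine ⟨hmax, (ih e _ hcard').2 ⟨hwlen, hnd.of_cons, ?_, ?_⟩⟩
            · intro t
              rw [hfil, Finset.mem_erase]
              constructor
              · intro htw
                refine ⟨?_, (hmem t).1 (List.mem_cons_of_mem _ htw)⟩
                rintro rfl; exact hsnotw htw
              · rintro ⟨hne, htA⟩
                rcases List.mem_cons.1 ((hmem t).2 htA) with rfl | h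
                · exact absurd rfl hne
                · exact h
            · cases w with
              | nil => simp at hwlen
              | cons h t =>
                  rw [listDescents_cons, if_pos (hltw h (by simp))] at hdes
                  omega
      · constructor
        · rintro ⟨⟨i, hi, hmem, -⟩, -⟩
          exfalso
          rw [getD_sh3] at hmem
          by_cases h0 : i = e
          · rw [if_pos h0] at hmem; exact hs hmem
          · rw [if_neg h0] at hmem; simp at hmem
        · rintro ⟨-, -, hmem, -⟩
          exact absurd ((hmem s).1 (by simp)) hs


lemma disj_of_ord {A B : Finset ℕ} (hord : ∀ a ∈ A, ∀ b ∈ B, a < b) :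
    Disjoint A B := by
  rw [Finset.disjoint_left]
  intro a ha hb
  exact lt_irrefl a (hord a ha a hb)

lemma filter_split {A : Finset ℕ} {s : ℕ} :
    A.filter (fun t => t < s) ∪ A.filter (fun t => s < t) = A.erase s := by
  ext t
  simp only [Finset.mem_union, Finset.mem_filter, Finset.mem_erase]
  constructor
  · rintro (⟨h, hlt⟩ | ⟨h, hlt⟩) <;> exact ⟨by omega, h⟩
  · rintro ⟨hne, h⟩
    rcases lt_or_gt_of_ne hne with hlt | hlt
    · exact Or.inl ⟨h, hlt⟩
    · exact Or.inr ⟨h, hlt⟩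

lemma card_filter_split {A : Finset ℕ} {s : ℕ} (hs : s ∈ A) :
    (A.filter (fun t => t < s)).card + (A.filter (fun t => s < t)).card = A.card - 1 := by
  rw [← Finset.card_union_of_disjoint, filter_split, Finset.card_erase_of_mem hs]
  rw [Finset.disjoint_left]
  intro a ha hb
  rw [Finset.mem_filter] at ha hb
  omega

lemma perm1 : ∀ (w : List ℕ) (e f : ℕ) (A B : Finset ℕ),
    (∀ a ∈ A, ∀ b ∈ B, a < b) → A.card + B.card = e + f + 2 →
    (IsCPermA (sh1 e f A B) w ↔
      (w.length = e + f + 2 ∧ w.Nodup ∧ (∀ t, t ∈ w ↔ t ∈ A ∪ B) ∧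
        listDescents w + (if w.headI ∈ A then 1 else 0) = e + 1)) := by
  intro w
  induction w with
  | nil =>
      intro e f A B hord hcard
      rw [isCPermA_nil_iff]
      constructor
      · intro h
        have hA : A = ∅ := h A (by simp [sh1])
        have hB : B = ∅ := h B (by simp [sh1])
        rw [hA, hB] at hcard; simp at hcard
      · rintro ⟨hl, -⟩; simp at hl
  | cons s w ih =>
      intro e f A B hord hcard
      rw [isCPermA_cons_iff]
      have hheadI : (s :: w).headI = s := rfl
      by_cases hsA : s ∈ A
      · have hsB : s ∉ B := fun h => lt_irrefl s (hord s hsA s h)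
        rcases e with _ | e
        · -- e = 0 : first-block deletion
          rw [deleteA_sh1_A0 f hsA, adm_sh1_A0_iff f hsA hsB]
          have hfilc : ∀ (hmin : ∀ t ∈ A, s ≤ t),
              A.filter (fun t => s < t) = A.erase s := by
            intro hmin
            ext t
            simp only [Finset.mem_filter, Finset.mem_erase]
            constructor
            · rintro ⟨ht, hlt⟩; exact ⟨by omega, ht⟩
            · rintro ⟨hne, ht⟩
              exact ⟨ht, lt_of_le_of_ne (hmin t ht) (Ne.symm hne)⟩
          have hdisj : Disjoint (A.erase s) B :=
            Finset.disjoint_of_subset_left (Finset.erase_subset _ _) (disj_of_ord hord)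
          have hcard2 : ∀ (hmin : ∀ t ∈ A, s ≤ t),
              (A.filter (fun t => s < t) ∪ B).card = f + 1 := by
            intro hmin
            rw [hfilc hmin, Finset.card_union_of_disjoint hdisj,
              Finset.card_erase_of_mem hsA]
            have hA1 : 1 ≤ A.card := Finset.card_pos.2 ⟨s, hsA⟩
            omega
          constructor
          · rintro ⟨hmin, hrest⟩
            obtain ⟨hl, hnd, hmem, hdes⟩ := (perm2 w f _ (hcard2 hmin)).1 hrest
            have hsnotw : s ∉ w := by
              intro hsw
              rcases Finset.mem_union.1 ((hmem s).1 hsw) with h | h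
              · rw [Finset.mem_filter] at h; omega
              · exact hsB h
            refine ⟨by simp only [List.length_cons]; omega, List.nodup_cons.2 ⟨hsnotw, hnd⟩, ?_, ?_⟩
            · intro t
              simp only [List.mem_cons, Finset.mem_union]
              constructor
              · rintro (rfl | htw)
                · exact Or.inl hsA
                · rcases Finset.mem_union.1 ((hmem t).1 htw) with h | h
                  · exact Or.inl (Finset.filter_subset _ _ h)
                  · exact Or.inr h
              · rintro (htA | htB)
                · rcases eq_or_ne t s with rfl | hne
                  · exact Or.inl rfl
                  · refine Or.inr ((hmem t).2 (Finset.mem_union_left _ ?_))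
                    rw [Finset.mem_filter]
                    exact ⟨htA, lt_of_le_of_ne (hmin t htA) (Ne.symm hne)⟩
                · exact Or.inr ((hmem t).2 (Finset.mem_union_right _ htB))
            · rw [hheadI, if_pos hsA]
              cases w with
              | nil => simp at hl
              | cons h t =>
                  rw [listDescents_cons, hdes]
                  have hh : s < h := by
                    rcases Finset.mem_union.1 ((hmem h).1 (by simp)) with hx | hx
                    · rw [Finset.mem_filter] at hx; exact hx.2
                    · exact hord s hsA h hx
                  rw [if_neg (by omega)]
          · rintro ⟨hl, hnd, hmem, hdes⟩
            rw [hheadI, if_pos hsA] at hdes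
            have hdes0 : listDescents (s :: w) = 0 := by omega
            have hsnotw : s ∉ w := (List.nodup_cons.1 hnd).1
            have hmin : ∀ t ∈ A, s ≤ t := by
              intro t ht
              rcases eq_or_ne t s with rfl | hne
              · exact le_refl _
              · have htw : t ∈ w := by
                  rcases List.mem_cons.1 ((hmem t).2 (Finset.mem_union_left _ ht))
                    with rfl | h
                  · exact absurd rfl hne
                  · exact h
                exact le_of_descents_zero w s hdes0 t htw
            refine ⟨hmin, (perm2 w f _ (hcard2 hmin)).2
              ⟨by simp at hl; omega, hnd.of_cons, ?_, ?_⟩⟩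
            · intro t
              rw [hfilc hmin]
              simp only [Finset.mem_union, Finset.mem_erase]
              constructor
              · intro htw
                have hne : t ≠ s := by rintro rfl; exact hsnotw htw
                rcases Finset.mem_union.1
                    ((hmem t).1 (List.mem_cons_of_mem _ htw)) with h | h
                · exact Or.inl ⟨hne, h⟩
                · exact Or.inr h
              · rintro (⟨hne, htA⟩ | htB)
                · rcases List.mem_cons.1 ((hmem t).2 (Finset.mem_union_left _ htA))
                    with rfl | h
                  · exact absurd rfl hne
                  · exact h
                · rcases List.mem_cons.1 ((hmem t).2 (Finset.mem_union_right _ htB))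
                    with rfl | h
                  · exact absurd htB hsB
                  · exact h
            · cases w with
              | nil => simp at hl
              | cons h t =>
                  rw [listDescents_cons] at hdes0
                  omega
        · -- e = e' + 1 : middle deletion from A
          rw [deleteA_sh1_A_mid e f hsA]
          have hord' : ∀ a ∈ A.filter (fun t => t < s), ∀ b ∈
              A.filter (fun t => s < t) ∪ B, a < b := by
            intro a ha b hb
            rw [Finset.mem_filter] at ha
            rcases Finset.mem_union.1 hb with h | h
            · rw [Finset.mem_filter] at h; omega
            · exact lt_trans ha.2 (hord s hsA b h)
          have hcard' : (A.filter (fun t => t < s)).card +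
              (A.filter (fun t => s < t) ∪ B).card = e + f + 2 := by
            have hdisj : Disjoint (A.filter (fun t => s < t)) B :=
              Finset.disjoint_of_subset_left (Finset.filter_subset _ _)
                (disj_of_ord hord)
            rw [Finset.card_union_of_disjoint hdisj, ← add_assoc,
              card_filter_split hsA]
            have hA1 : 1 ≤ A.card := Finset.card_pos.2 ⟨s, hsA⟩
            omega
          have hIH := ih e f _ _ hord' hcard'
          have hmm : ∀ t, (t ∈ A.filter (fun t => t < s) ∪
              (A.filter (fun t => s < t) ∪ B)) ↔ (t ∈ A ∪ B ∧ t ≠ s) := by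
            intro t
            simp only [Finset.mem_union, Finset.mem_filter]
            constructor
            · rintro (⟨h, hlt⟩ | ⟨h, hlt⟩ | h)
              · exact ⟨Or.inl h, by omega⟩
              · exact ⟨Or.inl h, by omega⟩
              · refine ⟨Or.inr h, ?_⟩
                rintro rfl; exact hsB h
            · rintro ⟨(h | h), hne⟩
              · rcases lt_or_gt_of_ne hne with hlt | hlt
                · exact Or.inl ⟨h, hlt⟩
                · exact Or.inr (Or.inl ⟨h, hlt⟩)
              · exact Or.inr (Or.inr h)
          constructor
          · rintro ⟨-, hrest⟩
            obtain ⟨hl, hnd, hmem, hdes⟩ := hIH.1 hrest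
            have hsnotw : s ∉ w := by
              intro hsw
              exact ((hmm s).1 ((hmem s).1 hsw)).2 rfl
            refine ⟨by simp only [List.length_cons]; omega, List.nodup_cons.2 ⟨hsnotw, hnd⟩, ?_, ?_⟩
            · intro t
              simp only [List.mem_cons]
              constructor
              · rintro (rfl | htw)
                · exact Finset.mem_union_left _ hsA
                · exact ((hmm t).1 ((hmem t).1 htw)).1
              · intro ht
                rcases eq_or_ne t s with rfl | hne
                · exact Or.inl rfl
                · exact Or.inr ((hmem t).2 ((hmm t).2 ⟨ht, hne⟩))
            · rw [hheadI, if_pos hsA]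
              cases w with
              | nil => simp at hl
              | cons h t =>
                  have hhd : (h :: t).headI = h := rfl
                  rw [hhd] at hdes
                  rw [listDescents_cons]
                  have hiff : (h ∈ A.filter (fun t => t < s)) ↔ h < s := by
                    rw [Finset.mem_filter]
                    constructor
                    · rintro ⟨-, h2⟩; exact h2
                    · intro hlt
                      rcases Finset.mem_union.1 ((hmm h).1 ((hmem h).1 (by simp))).1
                        with hx | hx
                      · exact ⟨hx, hlt⟩
                      · exact absurd (hord s hsA h hx) (by omega)
                  by_cases hlt : h < s
                  · rw [if_pos hlt]
                    rw [if_pos (hiff.2 hlt)] at hdes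
                    omega
                  · rw [if_neg hlt]
                    rw [if_neg (fun hx => hlt (hiff.1 hx))] at hdes
                    omega
          · rintro ⟨hl, hnd, hmem, hdes⟩
            refine ⟨adm_sh1_A_pos e f hsA, hIH.2 ⟨by simp at hl; omega,
              hnd.of_cons, ?_, ?_⟩⟩
            · intro t
              rw [hmm t]
              have hsnotw : s ∉ w := (List.nodup_cons.1 hnd).1
              constructor
              · intro htw
                refine ⟨(hmem t).1 (List.mem_cons_of_mem _ htw), ?_⟩
                rintro rfl; exact hsnotw htw
              · rintro ⟨ht, hne⟩
                rcases List.mem_cons.1 ((hmem t).2 ht) with rfl | h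
                · exact absurd rfl hne
                · exact h
            · rw [hheadI, if_pos hsA] at hdes
              cases w with
              | nil => simp at hl
              | cons h t =>
                  have hhd : (h :: t).headI = h := rfl
                  rw [hhd]
                  rw [listDescents_cons] at hdes
                  have hhw : h ∈ A ∪ B := (hmem h).1 (by simp)
                  have hiff : (h ∈ A.filter (fun t => t < s)) ↔ h < s := by
                    rw [Finset.mem_filter]
                    constructor
                    · rintro ⟨-, h2⟩; exact h2
                    · intro hlt
                      rcases Finset.mem_union.1 hhw with hx | hx
                      · exact ⟨hx, hlt⟩
                      · exact absurd (hord s hsA h hx) (by omega)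
                  by_cases hlt : h < s
                  · rw [if_pos (hiff.2 hlt)]
                    rw [if_pos hlt] at hdes
                    omega
                  · rw [if_neg (fun hx => hlt (hiff.1 hx))]
                    rw [if_neg hlt] at hdes
                    omega
      · by_cases hsB : s ∈ B
        · have hAs : ∀ a ∈ A, a < s := fun a ha => hord a ha s hsB
          rcases f with _ | f
          · -- f = 0 : last-block deletion
            rw [deleteA_sh1_B_last e hsA hsB, adm_sh1_B_last_iff e hsB hsA]
            have hfilc : ∀ (hmax : ∀ t ∈ B, t ≤ s),
                B.filter (fun t => t < s) = B.erase s := by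
              intro hmax
              ext t
              simp only [Finset.mem_filter, Finset.mem_erase]
              constructor
              · rintro ⟨ht, hlt⟩; exact ⟨by omega, ht⟩
              · rintro ⟨hne, ht⟩
                exact ⟨ht, lt_of_le_of_ne (hmax t ht) hne⟩
            have hcard2 : ∀ (hmax : ∀ t ∈ B, t ≤ s),
                (A ∪ B.filter (fun t => t < s)).card = e + 1 := by
              intro hmax
              have hdisj : Disjoint A (B.erase s) :=
                Finset.disjoint_of_subset_right (Finset.erase_subset _ _)
                  (disj_of_ord hord)
              rw [hfilc hmax, Finset.card_union_of_disjoint hdisj,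
                Finset.card_erase_of_mem hsB]
              have hB1 : 1 ≤ B.card := Finset.card_pos.2 ⟨s, hsB⟩
              omega
            have hmm : ∀ (hmax : ∀ t ∈ B, t ≤ s) t,
                (t ∈ A ∪ B.filter (fun t => t < s)) ↔ (t ∈ A ∪ B ∧ t ≠ s) := by
              intro hmax t
              simp only [Finset.mem_union, Finset.mem_filter]
              constructor
              · rintro (h | ⟨h, hlt⟩)
                · exact ⟨Or.inl h, by have := hAs t h; omega⟩
                · exact ⟨Or.inr h, by omega⟩
              · rintro ⟨(h | h), hne⟩
                · exact Or.inl h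
                · exact Or.inr ⟨h, lt_of_le_of_ne (hmax t h) hne⟩
            constructor
            · rintro ⟨hmax, hrest⟩
              obtain ⟨hl, hnd, hmem, hdes⟩ := (perm3 w e _ (hcard2 hmax)).1 hrest
              have hsnotw : s ∉ w := by
                intro hsw
                exact ((hmm hmax s).1 ((hmem s).1 hsw)).2 rfl
              refine ⟨by simp only [List.length_cons]; omega, List.nodup_cons.2 ⟨hsnotw, hnd⟩, ?_, ?_⟩
              · intro t
                simp only [List.mem_cons]
                constructor
                · rintro (rfl | htw)
                  · exact Finset.mem_union_right _ hsB
                  · exact ((hmm hmax t).1 ((hmem t).1 htw)).1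
                · intro ht
                  rcases eq_or_ne t s with rfl | hne
                  · exact Or.inl rfl
                  · exact Or.inr ((hmem t).2 ((hmm hmax t).2 ⟨ht, hne⟩))
              · rw [hheadI, if_neg hsA]
                cases w with
                | nil => simp at hl
                | cons h t =>
                    rw [listDescents_cons, hdes]
                    have hh : h < s := by
                      rcases Finset.mem_union.1 ((hmem h).1 (by simp)) with hx | hx
                      · exact hAs h hx
                      · rw [Finset.mem_filter] at hx; exact hx.2
                    rw [if_pos hh]
            · rintro ⟨hl, hnd, hmem, hdes⟩
              rw [hheadI, if_neg hsA] at hdes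
              have hwlen : w.length = e + 1 := by simp at hl; omega
              have hltw : ∀ t ∈ w, t < s :=
                lt_of_descents_max w s (by rw [hwlen]; omega)
              have hsnotw : s ∉ w := (List.nodup_cons.1 hnd).1
              have hmax : ∀ t ∈ B, t ≤ s := by
                intro t ht
                rcases eq_or_ne t s with rfl | hne
                · exact le_refl _
                · have htw : t ∈ w := by
                    rcases List.mem_cons.1 ((hmem t).2 (Finset.mem_union_right _ ht))
                      with rfl | h
                    · exact absurd rfl hne
                    · exact h
                  exact le_of_lt (hltw t htw)
              refine ⟨hmax, (perm3 w e _ (hcard2 hmax)).2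
                ⟨hwlen, hnd.of_cons, ?_, ?_⟩⟩
              · intro t
                rw [hmm hmax t]
                constructor
                · intro htw
                  refine ⟨(hmem t).1 (List.mem_cons_of_mem _ htw), ?_⟩
                  rintro rfl; exact hsnotw htw
                · rintro ⟨ht, hne⟩
                  rcases List.mem_cons.1 ((hmem t).2 ht) with rfl | h
                  · exact absurd rfl hne
                  · exact h
              · cases w with
                | nil => simp at hwlen
                | cons h t =>
                    rw [listDescents_cons, if_pos (hltw h (by simp))] at hdes
                    omega
          · -- f = f' + 1 : middle deletion from B
            rw [deleteA_sh1_B_mid e f hsA hsB]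
            have hord' : ∀ a ∈ A ∪ B.filter (fun t => t < s), ∀ b ∈
                B.filter (fun t => s < t), a < b := by
              intro a ha b hb
              rw [Finset.mem_filter] at hb
              rcases Finset.mem_union.1 ha with h | h
              · exact lt_trans (hAs a h) hb.2
              · rw [Finset.mem_filter] at h; omega
            have hcard' : (A ∪ B.filter (fun t => t < s)).card +
                (B.filter (fun t => s < t)).card = e + f + 2 := by
              have hdisj : Disjoint A (B.filter (fun t => t < s)) :=
                Finset.disjoint_of_subset_right (Finset.filter_subset _ _)
                  (disj_of_ord hord)
              rw [Finset.card_union_of_disjoint hdisj, add_assoc,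
                card_filter_split hsB]
              have hB1 : 1 ≤ B.card := Finset.card_pos.2 ⟨s, hsB⟩
              omega
            have hIH := ih e f _ _ hord' hcard'
            have hmm : ∀ t, (t ∈ (A ∪ B.filter (fun t => t < s)) ∪
                B.filter (fun t => s < t)) ↔ (t ∈ A ∪ B ∧ t ≠ s) := by
              intro t
              simp only [Finset.mem_union, Finset.mem_filter]
              constructor
              · rintro ((h | ⟨h, hlt⟩) | ⟨h, hlt⟩)
                · exact ⟨Or.inl h, by have := hAs t h; omega⟩
                · exact ⟨Or.inr h, by omega⟩
                · exact ⟨Or.inr h, by omega⟩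
              · rintro ⟨(h | h), hne⟩
                · exact Or.inl (Or.inl h)
                · rcases lt_or_gt_of_ne hne with hlt | hlt
                  · exact Or.inl (Or.inr ⟨h, hlt⟩)
                  · exact Or.inr ⟨h, hlt⟩
            have hiffh : ∀ h, h ∈ A ∪ B →
                ((h ∈ A ∪ B.filter (fun t => t < s)) ↔ h < s) := by
              intro h hhw
              simp only [Finset.mem_union, Finset.mem_filter]
              constructor
              · rintro (hx | ⟨-, hx⟩)
                · exact hAs h hx
                · exact hx
              · intro hlt
                rcases Finset.mem_union.1 hhw with hx | hx
                · exact Or.inl hx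
                · exact Or.inr ⟨hx, hlt⟩
            constructor
            · rintro ⟨-, hrest⟩
              obtain ⟨hl, hnd, hmem, hdes⟩ := hIH.1 hrest
              have hsnotw : s ∉ w := by
                intro hsw
                exact ((hmm s).1 ((hmem s).1 hsw)).2 rfl
              refine ⟨by simp only [List.length_cons]; omega, List.nodup_cons.2 ⟨hsnotw, hnd⟩, ?_, ?_⟩
              · intro t
                simp only [List.mem_cons]
                constructor
                · rintro (rfl | htw)
                  · exact Finset.mem_union_right _ hsB
                  · exact ((hmm t).1 ((hmem t).1 htw)).1
                · intro ht
                  rcases eq_or_ne t s with rfl | hne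
                  · exact Or.inl rfl
                  · exact Or.inr ((hmem t).2 ((hmm t).2 ⟨ht, hne⟩))
              · rw [hheadI, if_neg hsA]
                cases w with
                | nil => simp at hl
                | cons h t =>
                    have hhd : (h :: t).headI = h := rfl
                    rw [hhd] at hdes
                    rw [listDescents_cons]
                    have hhw : h ∈ A ∪ B := ((hmm h).1 ((hmem h).1 (by simp))).1
                    by_cases hlt : h < s
                    · rw [if_pos hlt]
                      rw [if_pos ((hiffh h hhw).2 hlt)] at hdes
                      omega
                    · rw [if_neg hlt]
                      rw [if_neg (fun hx => hlt ((hiffh h hhw).1 hx))] at hdes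
                      omega
            · rintro ⟨hl, hnd, hmem, hdes⟩
              refine ⟨adm_sh1_B_mid e f hsB hsA, hIH.2 ⟨by simp at hl; omega,
                hnd.of_cons, ?_, ?_⟩⟩
              · intro t
                rw [hmm t]
                have hsnotw : s ∉ w := (List.nodup_cons.1 hnd).1
                constructor
                · intro htw
                  refine ⟨(hmem t).1 (List.mem_cons_of_mem _ htw), ?_⟩
                  rintro rfl; exact hsnotw htw
                · rintro ⟨ht, hne⟩
                  rcases List.mem_cons.1 ((hmem t).2 ht) with rfl | h
                  · exact absurd rfl hne
                  · exact h
              · rw [hheadI, if_neg hsA] at hdes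
                cases w with
                | nil => simp at hl
                | cons h t =>
                    have hhd : (h :: t).headI = h := rfl
                    rw [hhd]
                    rw [listDescents_cons] at hdes
                    have hhw : h ∈ A ∪ B := (hmem h).1 (by simp)
                    by_cases hlt : h < s
                    · rw [if_pos ((hiffh h hhw).2 hlt)]
                      rw [if_pos hlt] at hdes
                      omega
                    · rw [if_neg (fun hx => hlt ((hiffh h hhw).1 hx))]
                      rw [if_neg hlt] at hdes
                      omega
        · -- s in neither block : both sides false
          constructor
          · rintro ⟨⟨i, hi, hmem, -⟩, -⟩
            exfalso
            rw [getD_sh1] at hmem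
            by_cases h0 : i = e
            · rw [if_pos h0] at hmem; exact hsA hmem
            · by_cases h1 : i = e + 1
              · rw [if_neg h0, if_pos h1] at hmem; exact hsB hmem
              · rw [if_neg h0, if_neg h1] at hmem; simp at hmem
          · rintro ⟨-, -, hmem, -⟩
            rcases Finset.mem_union.1 ((hmem s).1 (by simp)) with h | h
            · exact absurd h hsA
            · exact absurd h hsB


lemma key (n k : ℕ) (h1 : 1 ≤ k) (h2 : k ≤ n) (w : List ℕ) :
    IsCPermA (midDivision n k) w ↔
      (w.length = n ∧ w.Nodup ∧ (∀ t, t ∈ w ↔ t ∈ Finset.Icc 1 n) ∧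
        listDescents w = k - 1) := by
  have hcard : (Finset.Icc 1 n).card = n := by rw [Nat.card_Icc]; omega
  by_cases hk1 : k = 1
  · subst hk1
    have hmid : midDivision n 1 = sh2 (n-1) (Finset.Icc 1 n) := by
      simp [midDivision, sh2]
    rw [hmid, perm2 w (n-1) _ (by omega)]
    constructor <;> rintro ⟨a, b, c, d⟩ <;> exact ⟨by omega, b, c, by omega⟩
  · by_cases hkn : k = n
    · subst hkn
      have hmid : midDivision k k = sh3 (k-1) (Finset.Icc 1 k) := by
        simp [midDivision, sh3]
      rw [hmid, perm3 w (k-1) _ (by omega)]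
      constructor <;> rintro ⟨a, b, c, d⟩ <;> exact ⟨by omega, b, c, by omega⟩
    · -- 2 ≤ k < n
      have hk2 : 2 ≤ k := by omega
      have hkn' : k < n := by omega
      have hmid : midDivision n k = sh1 (k-2) (n-k) ∅ (Finset.Icc 1 n) := by
        obtain ⟨k', rfl⟩ : ∃ k', k = k' + 2 := ⟨k - 2, by omega⟩
        obtain ⟨m, rfl⟩ : ∃ m, n = k' + 2 + (m + 1) := ⟨n - k' - 3, by omega⟩
        have e1 : k' + 2 - 1 = k' + 1 := rfl
        have e2 : k' + 2 + (m + 1) - (k' + 2) = m + 1 := by omega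
        have e3 : k' + 2 - 2 = k' := rfl
        have e4 : k' + 2 + (m + 1) - (k' + 2) - 1 = m := by omega
        rw [midDivision, e1, e2, sh1, e3, List.replicate_succ',
          List.replicate_succ]
        simp
      rw [hmid, perm1 w (k-2) (n-k) ∅ (Finset.Icc 1 n) (by simp)
        (by rw [Finset.card_empty, hcard]; omega)]
      have hn : k - 2 + (n - k) + 2 = n := by omega
      rw [hn]
      constructor <;> rintro ⟨a, b, c, d⟩
      · refine ⟨a, b, c, ?_⟩
        rw [if_neg (Finset.notMem_empty _)] at d
        omega
      · refine ⟨a, b, c, ?_⟩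
        rw [if_neg (Finset.notMem_empty _)]
        omega


lemma range'_facts (n : ℕ) (w : List ℕ) (hw : w.Perm (List.range' 1 n)) :
    w.length = n ∧ w.Nodup ∧ (∀ t, t ∈ w ↔ t ∈ Finset.Icc 1 n) := by
  refine ⟨by rw [hw.length_eq, List.length_range'], hw.nodup_iff.2 (List.nodup_range' (s := 1) (n := n)), ?_⟩
  intro t
  rw [hw.mem_iff, List.mem_range'_1, Finset.mem_Icc]
  omega

end Aux
-- AUX END

/-- for the division with all elements in position `k`, a permutation of
`{1,…,n}` is a `C`-permutation iff it has exactly `k-1` descents; hence the number of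
`C`-permutations is the Eulerian number `A(n,k)`. -/
theorem cperm_descents (n k : ℕ) (h1 : 1 ≤ k) (h2 : k ≤ n) :
    (∀ w : List ℕ, w.Perm (List.range' 1 n) →
      (IsCPermA (midDivision n k) w ↔ listDescents w = k - 1)) ∧
    Nat.card {w : List ℕ // IsCPermA (midDivision n k) w} = eulerianA n k := by
  constructor
  · intro w hw
    obtain ⟨hl, hnd, hmem⟩ := range'_facts n w hw
    rw [key n k h1 h2 w]
    constructor
    · rintro ⟨-, -, -, h⟩; exact h
    · intro h; exact ⟨hl, hnd, hmem, h⟩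
  · have hiff : ∀ w : List ℕ, IsCPermA (midDivision n k) w ↔
        w ∈ (List.range' 1 n).permutations.filter
          (fun l => decide (listDescents l = k - 1)) := by
      intro w
      rw [key n k h1 h2 w, List.mem_filter, List.mem_permutations]
      constructor
      · rintro ⟨hl, hnd, hmem, hdes⟩
        refine ⟨?_, by simp [hdes]⟩
        refine List.perm_of_nodup_nodup_toFinset_eq hnd (List.nodup_range' (s := 1) (n := n)) ?_
        ext t
        simp only [List.mem_toFinset]
        rw [hmem t, Finset.mem_Icc, List.mem_range'_1]
        omega
      · rintro ⟨hp, hdes⟩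
        obtain ⟨hl, hnd, hmem⟩ := range'_facts n w hp
        exact ⟨hl, hnd, hmem, by simpa using hdes⟩
    rw [Nat.card_congr (Equiv.subtypeEquivRight hiff)]
    set L := (List.range' 1 n).permutations.filter
      (fun l => decide (listDescents l = k - 1)) with hL
    have hLnd : L.Nodup :=
      List.Nodup.filter _ (List.nodup_permutations _ (List.nodup_range' (s := 1) (n := n)))
    have hcount : Nat.card {w : List ℕ // w ∈ L} = L.length := by
      rw [Nat.card_congr (Equiv.subtypeEquivRight
        (fun w => (List.mem_toFinset (a := w) (l := L)).symm))]
      rw [Nat.card_eq_fintype_card, Fintype.card_coe,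
        List.toFinset_card_of_nodup hLnd]
    rw [hcount, eulerianA, List.countP_eq_length_filter]

end MixedEulerian
end

section
/- Let C be a division of {1,...,n} with all elements in position k (i.e., |C| = (0^{k-1}, n, 0^{n-k})), and suppose s_1 s_2 ... s_i is a sequence admissible with respect to C (each term admissible after deleting the previous ones). Let j be the index such that s_i lies in the j-th set of the division obtained after deleting s_1,...,s_{i-1}. Then the sequence s_1, s_2, ..., s_i has exactly k - j descents. -/
open scoped Pointwise
open MeasureTheory Nat

namespace MixedEulerian

/-! ### Auxiliary machinery for `admissible_seq_descents` -/

lemma getD_take' (l : List (Finset ℕ)) {m n : ℕ} (h : m < n) :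
    (l.take n).getD m ∅ = l.getD m ∅ := by
  simp [List.getD_eq_getElem?_getD, List.getElem?_take, h]

lemma getD_drop' (l : List (Finset ℕ)) (n m : ℕ) :
    (l.drop n).getD m ∅ = l.getD (n + m) ∅ := by
  simp [List.getD_eq_getElem?_getD, List.getElem?_drop]

lemma getD_append_lt {l₁ l₂ : List (Finset ℕ)} {m : ℕ} (h : m < l₁.length) :
    (l₁ ++ l₂).getD m ∅ = l₁.getD m ∅ := by
  simp [List.getD_eq_getElem?_getD, List.getElem?_append, h]

lemma getD_append_ge {l₁ l₂ : List (Finset ℕ)} {m : ℕ} (h : l₁.length ≤ m) :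
    (l₁ ++ l₂).getD m ∅ = l₂.getD (m - l₁.length) ∅ := by
  simp [List.getD_eq_getElem?_getD, List.getElem?_append_right h]

lemma getD_replicate' (n m : ℕ) : (List.replicate n (∅ : Finset ℕ)).getD m ∅ = ∅ := by
  simp only [List.getD_eq_getElem?_getD, List.getElem?_replicate]
  split <;> rfl

lemma findIdx_eq_of {l : List (Finset ℕ)} {s i : ℕ} (hi : i < l.length)
    (h1 : s ∈ l.getD i ∅) (h0 : ∀ m, m < i → s ∉ l.getD m ∅) :
    l.findIdx (fun b => decide (s ∈ b)) = i := by
  rw [List.findIdx_eq hi]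
  have h1' := h1
  rw [List.getD_eq_getElem l ∅ hi] at h1'
  refine ⟨by simpa using h1', ?_⟩
  intro j hj
  have h2 := h0 j hj
  rw [List.getD_eq_getElem l ∅ (hj.trans hi)] at h2
  simpa using h2

lemma getD_shape0 (C : List (Finset ℕ)) (X : Finset ℕ) (m : ℕ) :
    (X :: C.drop 2).getD m ∅ = if m = 0 then X else C.getD (m + 1) ∅ := by
  cases m with
  | zero => simp
  | succ m =>
    rw [List.getD_cons_succ, getD_drop', if_neg (by omega)]
    congr 1
    omega

lemma getD_shape1 (C : List (Finset ℕ)) (X : Finset ℕ) {t : ℕ} (m : ℕ) (ht : t ≤ C.length) :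
    (C.take t ++ [X]).getD m ∅ = if m < t then C.getD m ∅ else if m = t then X else ∅ := by
  have hlt : (C.take t).length = t := by simp [ht]
  rcases lt_trichotomy m t with h | h | h
  · rw [getD_append_lt (by omega), getD_take' C h, if_pos h]
  · subst h
    rw [getD_append_ge (by omega), if_neg (by omega), if_pos rfl, hlt]
    simp
  · rw [getD_append_ge (by omega), if_neg (by omega), if_neg (by omega), hlt]
    rcases Nat.exists_eq_add_of_lt h with ⟨j, rfl⟩
    have : t + j + 1 - t = j + 1 := by omega
    rw [this]
    simp

lemma getD_shape2 (C : List (Finset ℕ)) (X Y : Finset ℕ) {t : ℕ} (m : ℕ) (ht : t ≤ C.length) :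
    (C.take t ++ [X, Y] ++ C.drop (t + 3)).getD m ∅ =
      if m < t then C.getD m ∅ else if m = t then X else if m = t + 1 then Y
      else C.getD (m + 1) ∅ := by
  have hlt : (C.take t).length = t := by simp [ht]
  have hlen : (C.take t ++ [X, Y]).length = t + 2 := by simp [ht]
  rcases lt_trichotomy m t with h | h | h
  · rw [getD_append_lt (by omega), getD_append_lt (by omega), getD_take' C h, if_pos h]
  · subst h
    rw [getD_append_lt (by omega), getD_append_ge (by omega), hlt]
    simp
  · rw [if_neg (by omega), if_neg (by omega)]
    rcases Nat.lt_or_ge m (t + 2) with h2 | h2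
    · have hm : m = t + 1 := by omega
      subst hm
      rw [getD_append_lt (by omega), getD_append_ge (by omega), hlt, if_pos rfl]
      simp
    · rw [if_neg (by omega), getD_append_ge (by omega), hlen, getD_drop']
      congr 1
      omega

/-- The invariant maintained through the deletion process: all remaining elements sit in
(at most) two adjacent blocks `A` (elements `< x`) at position `K - 1` and `B`
(elements `> x`) at position `K`, where `x` is the last deleted element. -/
def Inv (C : List (Finset ℕ)) (K x : ℕ) : Prop :=
  ∃ A B : Finset ℕ,
    (∀ a ∈ A, a < x) ∧ (∀ b ∈ B, x < b) ∧
    (∀ m, m < C.length →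
      C.getD m ∅ = if m + 1 = K then A else if m = K then B else ∅) ∧
    (A ≠ ∅ → 1 ≤ K ∧ K - 1 < C.length) ∧
    (B ≠ ∅ → K < C.length)

lemma Inv_nil (K x : ℕ) : Inv [] K x :=
  ⟨∅, ∅, by simp, by simp, by intro m hm; simp at hm, by simp, by simp⟩

lemma deleteA_eq {C : List (Finset ℕ)} {s i : ℕ}
    (hfind : C.findIdx (fun b => decide (s ∈ b)) = i) :
    deleteA C s =
      if C.length ≤ 1 then []
      else if i = 0 then ((C.getD i ∅).filter (fun t => s < t) ∪ C.getD 1 ∅) :: C.drop 2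
      else if i = C.length - 1 then
        C.take (i - 1) ++ [C.getD (i - 1) ∅ ∪ (C.getD i ∅).filter (fun t => t < s)]
      else C.take (i - 1) ++
        [C.getD (i - 1) ∅ ∪ (C.getD i ∅).filter (fun t => t < s),
         (C.getD i ∅).filter (fun t => s < t) ∪ C.getD (i + 1) ∅] ++ C.drop (i + 2) := by
  simp only [deleteA, hfind]

lemma step {C : List (Finset ℕ)} {K x s i : ℕ} (hI : Inv C K x)
    (hi : i < C.length) (hsi : s ∈ C.getD i ∅) :
    (s < x ∧ 1 ≤ K ∧ C.findIdx (fun b => decide (s ∈ b)) = K - 1 ∧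
      Inv (deleteA C s) (K - 1) s) ∨
    (x < s ∧ C.findIdx (fun b => decide (s ∈ b)) = K ∧ Inv (deleteA C s) K s) := by
  obtain ⟨A, B, hax, hbx, hblk, hAne, hBne⟩ := hI
  have hsi' := hsi
  rw [hblk i hi] at hsi'
  by_cases hiK1 : i + 1 = K
  · -- `s` lies in the lower block `A`, at position `i = K - 1`
    rw [if_pos hiK1] at hsi'
    have hsx : s < x := hax s hsi'
    obtain ⟨hK1, hKlen⟩ := hAne (Finset.ne_empty_of_mem hsi')
    have hgi : C.getD i ∅ = A := by
      rw [hblk i hi]; split_ifs <;> first | rfl | (exfalso; omega)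
    have hfind : C.findIdx (fun b => decide (s ∈ b)) = i := by
      refine findIdx_eq_of hi hsi ?_
      intro m hm
      rw [hblk m (by omega)]
      split_ifs <;> first | exact Finset.notMem_empty s | (exfalso; omega)
    refine Or.inl ⟨hsx, hK1, by rw [hfind]; omega, ?_⟩
    rw [deleteA_eq hfind]
    by_cases hlen : C.length ≤ 1
    · rw [if_pos hlen]; exact Inv_nil _ _
    rw [if_neg hlen]
    by_cases hi0 : i = 0
    · -- here `K = 1`
      have hK : K = 1 := by omega
      have hget1 : C.getD 1 ∅ = B := by
        rw [hblk 1 (by omega)]; split_ifs <;> first | rfl | (exfalso; omega)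
      rw [if_pos hi0, hgi, hget1]
      refine ⟨∅, A.filter (fun t => s < t) ∪ B, by simp, ?_, ?_, by simp, ?_⟩
      · intro b hb
        rcases Finset.mem_union.1 hb with hb | hb
        · exact (Finset.mem_filter.1 hb).2
        · exact hsx.trans (hbx b hb)
      · intro m hm
        have hmlen : m < C.length - 1 := by
          simp only [List.length_cons, List.length_drop] at hm; omega
        rw [getD_shape0, hblk (m + 1) (by omega)]
        split_ifs <;> first | rfl | (exfalso; omega)
      · intro _
        simp only [List.length_cons, List.length_drop]
        omega
    rw [if_neg hi0]
    have hi1 : 1 ≤ i := by omega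
    have hgim1 : C.getD (i - 1) ∅ = ∅ := by
      rw [hblk (i - 1) (by omega)]; split_ifs <;> first | rfl | (exfalso; omega)
    by_cases hil : i = C.length - 1
    · rw [if_pos hil, hgim1, hgi]
      refine ⟨∅ ∪ A.filter (fun t => t < s), ∅, ?_, by simp, ?_, ?_, by simp⟩
      · intro a ha
        simp only [Finset.empty_union, Finset.mem_filter] at ha
        exact ha.2
      · intro m hm
        have hmlen : m < i := by
          simp only [List.length_append, List.length_take, List.length_cons,
            List.length_nil] at hm
          omega
        rw [getD_shape1 C _ m (by omega)]
        by_cases hcase : m < i - 1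
        · rw [if_pos hcase, hblk m (by omega)]
          split_ifs <;> first | rfl | (exfalso; omega)
        · rw [if_neg hcase]
          split_ifs <;> first | rfl | (exfalso; omega)
      · intro _
        simp only [List.length_append, List.length_take, List.length_cons, List.length_nil]
        omega
    · rw [if_neg hil, hgim1, hgi]
      have hgip1 : C.getD (i + 1) ∅ = B := by
        rw [hblk (i + 1) (by omega)]; split_ifs <;> first | rfl | (exfalso; omega)
      rw [hgip1, show i + 2 = (i - 1) + 3 from by omega]
      refine ⟨∅ ∪ A.filter (fun t => t < s), A.filter (fun t => s < t) ∪ B,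
        ?_, ?_, ?_, ?_, ?_⟩
      · intro a ha
        simp only [Finset.empty_union, Finset.mem_filter] at ha
        exact ha.2
      · intro b hb
        rcases Finset.mem_union.1 hb with hb | hb
        · exact (Finset.mem_filter.1 hb).2
        · exact hsx.trans (hbx b hb)
      · intro m hm
        have hmlen : m < C.length - 1 := by
          simp only [List.length_append, List.length_take, List.length_cons,
            List.length_nil, List.length_drop] at hm
          omega
        rw [getD_shape2 C _ _ m (by omega)]
        by_cases hcase : m < i - 1
        · rw [if_pos hcase, hblk m (by omega)]
          split_ifs <;> first | rfl | (exfalso; omega)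
        · by_cases hcase2 : m ≤ i
          · rw [if_neg hcase]
            split_ifs <;> first | rfl | (exfalso; omega)
          · rw [if_neg hcase, if_neg (by omega), if_neg (by omega),
              hblk (m + 1) (by omega)]
            split_ifs <;> first | rfl | (exfalso; omega)
      · intro _
        simp only [List.length_append, List.length_take, List.length_cons,
          List.length_nil, List.length_drop]
        omega
      · intro _
        simp only [List.length_append, List.length_take, List.length_cons,
          List.length_nil, List.length_drop]
        omega
  · rw [if_neg hiK1] at hsi'
    by_cases hiK : i = K
    swap
    · rw [if_neg hiK] at hsi'
      exact absurd hsi' (Finset.notMem_empty s)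
    -- `s` lies in the upper block `B`, at position `i = K`
    rw [if_pos hiK] at hsi'
    have hsx : x < s := hbx s hsi'
    subst hiK
    have hgi : C.getD i ∅ = B := by
      rw [hblk i hi]; split_ifs <;> first | rfl | (exfalso; omega)
    have hfind : C.findIdx (fun b => decide (s ∈ b)) = i := by
      refine findIdx_eq_of hi hsi ?_
      intro m hm
      rw [hblk m (by omega)]
      split_ifs <;>
        first
          | exact Finset.notMem_empty s
          | (exfalso; omega)
          | (intro hsA; exact absurd (hax s hsA) (by omega))
    refine Or.inr ⟨hsx, hfind, ?_⟩
    rw [deleteA_eq hfind]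
    by_cases hlen : C.length ≤ 1
    · rw [if_pos hlen]; exact Inv_nil _ _
    rw [if_neg hlen]
    by_cases hi0 : i = 0
    · have hget1 : C.getD 1 ∅ = ∅ := by
        rw [hblk 1 (by omega)]; split_ifs <;> first | rfl | (exfalso; omega)
      rw [if_pos hi0, hgi, hget1]
      refine ⟨∅, B.filter (fun t => s < t) ∪ ∅, by simp, ?_, ?_, by simp, ?_⟩
      · intro b hb
        rcases Finset.mem_union.1 hb with hb | hb
        · exact (Finset.mem_filter.1 hb).2
        · exact absurd hb (Finset.notMem_empty b)
      · intro m hm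
        have hmlen : m < C.length - 1 := by
          simp only [List.length_cons, List.length_drop] at hm; omega
        rw [getD_shape0, hblk (m + 1) (by omega)]
        split_ifs <;> first | rfl | (exfalso; omega)
      · intro _
        simp only [List.length_cons, List.length_drop]
        omega
    rw [if_neg hi0]
    have hi1 : 1 ≤ i := by omega
    have hgim1 : C.getD (i - 1) ∅ = A := by
      rw [hblk (i - 1) (by omega)]; split_ifs <;> first | rfl | (exfalso; omega)
    by_cases hil : i = C.length - 1
    · rw [if_pos hil, hgim1, hgi]
      refine ⟨A ∪ B.filter (fun t => t < s), ∅, ?_, by simp, ?_, ?_, by simp⟩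
      · intro a ha
        rcases Finset.mem_union.1 ha with ha | ha
        · exact (hax a ha).trans hsx
        · exact (Finset.mem_filter.1 ha).2
      · intro m hm
        have hmlen : m < i := by
          simp only [List.length_append, List.length_take, List.length_cons,
            List.length_nil] at hm
          omega
        rw [getD_shape1 C _ m (by omega)]
        by_cases hcase : m < i - 1
        · rw [if_pos hcase, hblk m (by omega)]
          split_ifs <;> first | rfl | (exfalso; omega)
        · rw [if_neg hcase]
          split_ifs <;> first | rfl | (exfalso; omega)
      · intro _
        simp only [List.length_append, List.length_take, List.length_cons, List.length_nil]
        omega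
    · rw [if_neg hil, hgim1, hgi]
      have hgip1 : C.getD (i + 1) ∅ = ∅ := by
        rw [hblk (i + 1) (by omega)]; split_ifs <;> first | rfl | (exfalso; omega)
      rw [hgip1, show i + 2 = (i - 1) + 3 from by omega]
      refine ⟨A ∪ B.filter (fun t => t < s), B.filter (fun t => s < t) ∪ ∅,
        ?_, ?_, ?_, ?_, ?_⟩
      · intro a ha
        rcases Finset.mem_union.1 ha with ha | ha
        · exact (hax a ha).trans hsx
        · exact (Finset.mem_filter.1 ha).2
      · intro b hb
        rcases Finset.mem_union.1 hb with hb | hb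
        · exact (Finset.mem_filter.1 hb).2
        · exact absurd hb (Finset.notMem_empty b)
      · intro m hm
        have hmlen : m < C.length - 1 := by
          simp only [List.length_append, List.length_take, List.length_cons,
            List.length_nil, List.length_drop] at hm
          omega
        rw [getD_shape2 C _ _ m (by omega)]
        by_cases hcase : m < i - 1
        · rw [if_pos hcase, hblk m (by omega)]
          split_ifs <;> first | rfl | (exfalso; omega)
        · by_cases hcase2 : m ≤ i
          · rw [if_neg hcase]
            split_ifs <;> first | rfl | (exfalso; omega)
          · rw [if_neg hcase, if_neg (by omega), if_neg (by omega),
              hblk (m + 1) (by omega)]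
            split_ifs <;> first | rfl | (exfalso; omega)
      · intro _
        simp only [List.length_append, List.length_take, List.length_cons,
          List.length_nil, List.length_drop]
        omega
      · intro _
        simp only [List.length_append, List.length_take, List.length_cons,
          List.length_nil, List.length_drop]
        omega

lemma listDescents_cons_cons (a b : ℕ) (l : List ℕ) :
    listDescents (a :: b :: l) = (if b < a then 1 else 0) + listDescents (b :: l) := by
  simp only [listDescents, List.tail_cons, List.zip_cons_cons, List.countP_cons]
  split_ifs <;> simp_all <;> omega

lemma listDescents_zero_cons (l : List ℕ) : listDescents (0 :: l) = listDescents l := by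
  cases l with
  | nil => rfl
  | cons a l =>
    rw [listDescents_cons_cons]
    simp

lemma listDescents_pair (x s : ℕ) : listDescents [x, s] = if s < x then 1 else 0 := by
  rw [listDescents_cons_cons]
  have : listDescents [s] = 0 := rfl
  omega

lemma main_lemma (w : List ℕ) : ∀ (C : List (Finset ℕ)) (K x s : ℕ),
    Inv C K x → AdmissibleSeqA C (w ++ [s]) →
    listDescents (x :: (w ++ [s])) +
      (List.foldl deleteA C w).findIdx (fun b => decide (s ∈ b)) = K := by
  induction w with
  | nil =>
    intro C K x s hI hadm
    obtain ⟨hA, -⟩ : AdmissibleA C s ∧ AdmissibleSeqA (deleteA C s) [] := hadm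
    obtain ⟨i, hi, hsi, -⟩ := hA
    simp only [List.nil_append, List.foldl_nil]
    rcases step hI hi hsi with ⟨hsx, hK, hfind, -⟩ | ⟨hsx, hfind, -⟩ <;>
      rw [hfind, listDescents_pair] <;> split_ifs <;> omega
  | cons a w ih =>
    intro C K x s hI hadm
    obtain ⟨hA, hrest⟩ : AdmissibleA C a ∧ AdmissibleSeqA (deleteA C a) (w ++ [s]) := hadm
    obtain ⟨i, hi, hsi, -⟩ := hA
    simp only [List.cons_append, List.foldl_cons]
    rcases step hI hi hsi with ⟨hax', hK, -, hI'⟩ | ⟨hax', -, hI'⟩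
    · have h2 := ih (deleteA C a) (K - 1) a s hI' hrest
      rw [listDescents_cons_cons, if_pos hax']
      omega
    · have h2 := ih (deleteA C a) K a s hI' hrest
      have hn : ¬ a < x := by omega
      rw [listDescents_cons_cons, if_neg hn]
      omega


/-- for `|C| = (0^{k-1}, n, 0^{n-k})` and an admissible sequence
`s₁ … s_i`, if `s_i` lies in the `j`-th block just before its deletion, then
`s₁, …, s_i` has exactly `k - j` descents. -/
theorem admissible_seq_descents (n k : ℕ) (h1 : 1 ≤ k) (h2 : k ≤ n)
    (p : List ℕ) (s : ℕ) (h : AdmissibleSeqA (midDivision n k) (p ++ [s])) :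
    listDescents (p ++ [s]) =
      k - ((List.foldl deleteA (midDivision n k) p).findIdx
            (fun b => decide (s ∈ b)) + 1) := by
  have hlen : (midDivision n k).length = n := by
    simp only [midDivision, List.length_append, List.length_replicate, List.length_cons,
      List.length_nil]
    omega
  have hI : Inv (midDivision n k) (k - 1) 0 := by
    refine ⟨∅, Finset.Icc 1 n, by simp, ?_, ?_, by simp, ?_⟩
    · intro b hb
      have := Finset.mem_Icc.mp hb
      omega
    · intro m hm
      rw [show midDivision n k =
        List.replicate (k - 1) ∅ ++ [Finset.Icc 1 n] ++ List.replicate (n - k) ∅ from rfl]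
      rcases lt_trichotomy m (k - 1) with hc | hc | hc
      · rw [getD_append_lt (by simp; omega), getD_append_lt (by simp; omega), getD_replicate']
        split_ifs <;> first | rfl | (exfalso; omega)
      · rw [getD_append_lt (by simp; omega), getD_append_ge (by simp; omega)]
        simp only [List.length_replicate]
        rw [show m - (k - 1) = 0 from by omega, List.getD_cons_zero]
        split_ifs <;> first | rfl | (exfalso; omega)
      · rw [getD_append_ge (by simp; omega), getD_replicate']
        split_ifs <;> first | rfl | (exfalso; omega)
    · intro _
      rw [hlen]
      omega
  have hm := main_lemma p (midDivision n k) (k - 1) 0 s hI h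
  rw [listDescents_zero_cons] at hm
  omega

end MixedEulerian
end
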